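/- arXiv:1908.09901 — 6 statements merged into one kernel-verified Lean document; each statement's English description precedes it below -/
import Mathlib

section
/- If S is a stationary subset of ω₁ endowed with the subspace topology, then the intersection of countably many subsets of S, each closed and unbounded in S, is again closed and unbounded in S. -/
open Set Topology Ordinal

/-- A club (closed unbounded) subset of `ω₁` (as a set of ordinals with the order topology). -/
def IsClubBelowOmega1 (C : Set Ordinal) : Prop :=
  C ⊆ Set.Iio ω₁ ∧ (∀ α < ω₁, ∃ β ∈ C, α ≤ β) ∧ ∀ α < ω₁, α ∈ closure C → α ∈ C

/-- A stationary subset of `ω₁`. -/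
def IsStationaryBelowOmega1 (S : Set Ordinal) : Prop :=
  S ⊆ Set.Iio ω₁ ∧ ∀ C : Set Ordinal, IsClubBelowOmega1 C → (S ∩ C).Nonempty

/-- `C` is club in `S`: `C ⊆ S`, `C` is closed in the subspace topology of `S`
and unbounded in `S`. -/
def IsClubIn (C S : Set Ordinal) : Prop :=
  C ⊆ S ∧ (∀ α ∈ S, ∃ β ∈ C, α ≤ β) ∧ ∀ α ∈ S, α ∈ closure C → α ∈ C

lemma my_omega1_isLimit : Order.IsSuccLimit ω₁ := by
  rw [← Cardinal.ord_aleph]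
  exact Cardinal.isSuccLimit_ord (Cardinal.aleph0_le_aleph _)

lemma my_succ_lt_omega1 {a : Ordinal} (h : a < ω₁) : a + 1 < ω₁ := by
  rw [Ordinal.add_one_eq_succ]
  exact my_omega1_isLimit.succ_lt h

lemma my_sup_lt_omega1 (g : ℕ → Ordinal) (h : ∀ k, g k < ω₁) : (⨆ k, g k) < ω₁ := by
  exact Ordinal.iSup_lt_omega_one h

lemma my_exists_le_of_mem_closure {a : Ordinal} {s : Set Ordinal} (h : a ∈ closure s) :
    ∃ x ∈ s, x ≤ a := by
  obtain ⟨⟨x, hx⟩, -⟩ := ((Ordinal.mem_closure_tfae a s).out 0 2).mp h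
  exact ⟨x, hx.1, hx.2⟩

lemma my_club_Ici {δ : Ordinal} (hδ : δ < ω₁) : IsClubBelowOmega1 (Ici δ ∩ Iio ω₁) := by
  refine ⟨inter_subset_right, fun α hα => ⟨max δ α, ⟨(le_max_left _ _ : δ ≤ max δ α), max_lt hδ hα⟩,
    le_max_right _ _⟩, fun α hα h => ?_⟩
  obtain ⟨x, hx, hxa⟩ := my_exists_le_of_mem_closure h
  exact ⟨hx.1.trans hxa, hα⟩

/-- in a stationary subset `S` of ω₁ (with the subspace topology), the
intersection of countably many subsets of `S` that are club in `S` is again club in `S`. -/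
theorem iInter_isClubIn_of_stationary (S : Set Ordinal) (hS : IsStationaryBelowOmega1 S)
    (C : ℕ → Set Ordinal) (hC : ∀ n, IsClubIn (C n) S) :
    IsClubIn (⋂ n, C n) S := by
  -- S is unbounded below ω₁
  have hSub : ∀ δ < ω₁, ∃ s ∈ S, δ ≤ s := by
    intro δ hδ
    obtain ⟨s, hsS, hs⟩ := hS.2 _ (my_club_Ici hδ)
    exact ⟨s, hsS, hs.1⟩
  -- each C n has points above any δ < ω₁
  have hnext : ∀ (n : ℕ) (δ : Ordinal), ∃ c, c ∈ C n ∧ (δ < ω₁ → δ ≤ c) ∧ c < ω₁ := by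
    intro n δ
    by_cases hδ : δ < ω₁
    · obtain ⟨s, hsS, hs⟩ := hSub δ hδ
      obtain ⟨c, hc1, hc2⟩ := (hC n).2.1 s hsS
      exact ⟨c, hc1, fun _ => hs.trans hc2, hS.1 ((hC n).1 hc1)⟩
    · obtain ⟨s, hsS, -⟩ := hSub 0 (omega_pos 1)
      obtain ⟨c, hc1, -⟩ := (hC n).2.1 s hsS
      exact ⟨c, hc1, fun h => absurd h hδ, hS.1 ((hC n).1 hc1)⟩
  choose f hf1 hf2 hf3 using hnext
  -- key: above any δ < ω₁ there is β < ω₁ in all the closures of the C n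
  have key : ∀ δ < ω₁, ∃ β, δ ≤ β ∧ β < ω₁ ∧ ∀ n, β ∈ closure (C n) := by
    intro δ hδ
    set g : ℕ → Ordinal :=
      fun k => Nat.rec δ (fun k ih => (Finset.range (k + 1)).sup fun n => f n (ih + 1)) k with hg
    have hgs : ∀ k, g (k + 1) = (Finset.range (k + 1)).sup fun n => f n (g k + 1) :=
      fun k => rfl
    have hglt : ∀ k, g k < ω₁ := by
      intro k
      induction k with
      | zero => exact hδ
      | succ k ih =>
        rw [hgs]
        exact Finset.sup_lt_iff (by simpa using omega_pos 1) |>.mpr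
          fun n _ => hf3 n (g k + 1)
    have hgsucc : ∀ k, g k + 1 ≤ g (k + 1) := by
      intro k
      rw [hgs]
      exact (hf2 0 (g k + 1) (my_succ_lt_omega1 (hglt k))).trans
        (Finset.le_sup (f := fun n => f n (g k + 1)) (by simp))
    have hglt' : ∀ k, g k < g (k + 1) := by
      intro k
      refine lt_of_lt_of_le ?_ (hgsucc k)
      rw [Ordinal.add_one_eq_succ]
      exact Order.lt_succ _
    have hgmono : Monotone g := monotone_nat_of_le_succ fun k => (hglt' k).le
    refine ⟨⨆ k, g k, ?_, my_sup_lt_omega1 g hglt, ?_⟩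
    · exact le_ciSup (Ordinal.bddAbove_range g) 0
    · intro n
      rw [Ordinal.mem_closure_iff_iSup]
      refine ⟨ULift ℕ, inferInstance, fun k => f n (g (n + k.down) + 1),
        fun k => hf1 n _, ?_⟩
      apply le_antisymm
      · refine ciSup_le fun k => ?_
        have h1 : f n (g (n + k.down) + 1) ≤ g (n + k.down + 1) := by
          rw [hgs]
          exact Finset.le_sup (f := fun m => f m (g (n + k.down) + 1))
            (Finset.mem_range.mpr (by omega))
        exact h1.trans (le_ciSup (Ordinal.bddAbove_range g) (n + k.down + 1))
      · refine ciSup_le fun k => ?_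
        have h1 : g k ≤ g (n + k) := hgmono (by omega)
        have h2 : g (n + k) + 1 ≤ f n (g (n + k) + 1) :=
          hf2 n _ (my_succ_lt_omega1 (hglt (n + k)))
        have h3 : g k ≤ f n (g (n + k) + 1) := by
          refine h1.trans (le_trans ?_ h2)
          rw [Ordinal.add_one_eq_succ]
          exact (Order.le_succ _)
        exact h3.trans
          (le_ciSup (Ordinal.bddAbove_range fun k : ULift ℕ => f n (g (n + k.down) + 1)) ⟨k⟩)
  refine ⟨fun x hx => (hC 0).1 (mem_iInter.mp hx 0), ?_, ?_⟩
  · -- unboundedness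
    intro α hαS
    have hα : α < ω₁ := hS.1 hαS
    set E : Set Ordinal := {β | α < β ∧ β < ω₁ ∧ ∀ n, β ∈ closure (C n)} with hE
    have hEclub : IsClubBelowOmega1 E := by
      refine ⟨fun x hx => hx.2.1, ?_, ?_⟩
      · intro δ hδ
        obtain ⟨β, hβ1, hβ2, hβ3⟩ := key (max (α + 1) δ) (max_lt (my_succ_lt_omega1 hα) hδ)
        refine ⟨β, ⟨?_, hβ2, hβ3⟩, le_trans (le_max_right _ _) hβ1⟩
        have : α + 1 ≤ β := le_trans (le_max_left _ _) hβ1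
        rw [Ordinal.add_one_eq_succ] at this
        exact (Order.succ_le_iff).mp this
      · intro γ hγ h
        obtain ⟨x, hxE, hxγ⟩ := my_exists_le_of_mem_closure h
        refine ⟨lt_of_lt_of_le hxE.1 hxγ, hγ, fun n => ?_⟩
        have : closure E ⊆ closure (C n) := by
          rw [← closure_closure (s := C n)]
          exact closure_mono fun x hx => hx.2.2 n
        exact this h
    obtain ⟨β, hβS, hβE⟩ := hS.2 E hEclub
    refine ⟨β, mem_iInter.mpr fun n => (hC n).2.2 β hβS (hβE.2.2 n), hβE.1.le⟩
  · -- closedness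
    intro α hαS h
    exact mem_iInter.mpr fun n => (hC n).2.2 α hαS (closure_mono (iInter_subset _ n) h)
end

section
/- Let S be a stationary subset of ω₁ with the subspace topology, and let Y be a regular space with Gδ points that is [ℵ₀,ℵ₁]-compact. Then every continuous function f : S → Y is eventually constant: there exists α < ω₁ such that f(β) = f(α) for all β ∈ S with β ≥ α. -/
open Set Topology Cardinal Ordinal

universe u

/-- `X` is [ℵ₀,ℵ₁]-compact: every open cover of size at most ℵ₁ has a countable subcover. -/
def AlephOneCompactSpace (X : Type u) [TopologicalSpace X] : Prop :=
  ∀ 𝒰 : Set (Set X), (∀ U ∈ 𝒰, IsOpen U) → #𝒰 ≤ aleph 1 → ⋃₀ 𝒰 = Set.univ →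
    ∃ 𝒱 ⊆ 𝒰, 𝒱.Countable ∧ ⋃₀ 𝒱 = Set.univ

universe v

namespace EvConstAux

theorem omega1_isLimit : Order.IsSuccLimit (ω₁ : Ordinal.{v}) := by
  rw [← ord_aleph]; exact isSuccLimit_ord (aleph0_le_aleph 1)

theorem sup_lt_omega1 {g : ℕ → Ordinal.{v}} (h : ∀ n, g n < ω₁) : (⨆ n, g n) < ω₁ := by
  rw [← ord_aleph] at h ⊢
  exact iSup_lt_ord_lift_of_isRegular isRegular_aleph_one
    (by simpa using aleph0_lt_aleph_one) h

theorem tail_club {γ : Ordinal.{v}} (hγ : γ < ω₁) :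
    IsClubBelowOmega1 (Ioi γ ∩ Iio ω₁) := by
  refine ⟨inter_subset_right, fun α hα => ?_, fun α hα h => ?_⟩
  · refine ⟨max (Order.succ γ) α, ⟨?_, ?_⟩, le_max_right _ _⟩
    · exact lt_of_lt_of_le (Order.lt_succ γ) (le_max_left _ _)
    · exact max_lt (omega1_isLimit.succ_lt hγ) hα
  · refine ⟨?_, hα⟩
    by_contra hle
    simp only [mem_Ioi, not_lt] at hle
    obtain ⟨β, hβ1, hβ2, _⟩ := mem_closure_iff.mp h (Iio (Order.succ γ)) isOpen_Iio
      (lt_of_le_of_lt hle (Order.lt_succ γ))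
    exact absurd (mem_Ioi.mp hβ2) (not_lt.mpr (Order.lt_succ_iff.mp hβ1))

theorem closure_club (E : Set Ordinal.{v}) (hE1 : E ⊆ Iio ω₁)
    (hE2 : ∀ γ < ω₁, ∃ β ∈ E, γ ≤ β) :
    IsClubBelowOmega1 (closure E ∩ Iio ω₁) := by
  refine ⟨inter_subset_right, fun α hα => ?_, fun α hα h => ?_⟩
  · obtain ⟨β, hβE, hβ⟩ := hE2 α hα
    exact ⟨β, ⟨subset_closure hβE, hE1 hβE⟩, hβ⟩
  · refine ⟨?_, hα⟩
    have h2 : closure (closure E ∩ Iio ω₁) ⊆ closure E := by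
      refine (closure_mono inter_subset_left).trans ?_
      rw [closure_closure]
    exact h2 h

open scoped Classical in
noncomputable def nextIn (A : Set Ordinal.{v}) (x : Ordinal.{v}) : Ordinal.{v} :=
  if h : ∃ β, β ∈ A ∧ x < β ∧ β < ω₁ then h.choose else 0

theorem nextIn_spec {A : Set Ordinal.{v}} (hA1 : A ⊆ Iio ω₁)
    (hA2 : ∀ γ < ω₁, ∃ β ∈ A, γ ≤ β) {x : Ordinal.{v}} (hx : x < ω₁) :
    nextIn A x ∈ A ∧ x < nextIn A x ∧ nextIn A x < ω₁ := by
  have h : ∃ β, β ∈ A ∧ x < β ∧ β < ω₁ := by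
    obtain ⟨β, hβ, hle⟩ := hA2 (Order.succ x) (omega1_isLimit.succ_lt hx)
    exact ⟨β, hβ, lt_of_lt_of_le (Order.lt_succ x) hle, hA1 hβ⟩
  unfold nextIn
  rw [dif_pos h]
  exact h.choose_spec

theorem club_inter {C D : Set Ordinal.{v}} (hC : IsClubBelowOmega1 C)
    (hD : IsClubBelowOmega1 D) : IsClubBelowOmega1 (C ∩ D) := by
  obtain ⟨hC1, hC2, hC3⟩ := hC
  obtain ⟨hD1, hD2, hD3⟩ := hD
  refine ⟨fun x hx => hC1 hx.1, fun α hα => ?_, fun α hα h =>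
    ⟨hC3 α hα ((closure_mono inter_subset_left) h),
     hD3 α hα ((closure_mono inter_subset_right) h)⟩⟩
  set a : ℕ → Ordinal.{v} :=
    fun n => Nat.rec (nextIn C α) (fun _ x => nextIn C (nextIn D x)) n with ha
  have hinv : ∀ n, a n ∈ C ∧ α < a n ∧ a n < ω₁ := by
    intro n
    induction n with
    | zero => exact nextIn_spec hC1 hC2 hα
    | succ k ih =>
      have hd := nextIn_spec hD1 hD2 ih.2.2
      have hc := nextIn_spec hC1 hC2 hd.2.2
      exact ⟨hc.1, lt_trans ih.2.1 (lt_trans hd.2.1 hc.2.1), hc.2.2⟩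
  have hb : ∀ n, nextIn D (a n) ∈ D ∧ a n < nextIn D (a n) ∧ nextIn D (a n) < ω₁ :=
    fun n => nextIn_spec hD1 hD2 (hinv n).2.2
  have hba : ∀ n, nextIn D (a n) ≤ a (n + 1) := by
    intro n
    have := (nextIn_spec hC1 hC2 (hb n).2.2).2.1
    exact le_of_lt this
  set s : Ordinal.{v} := ⨆ n, a n with hs
  have hslt : s < ω₁ := sup_lt_omega1 (fun n => (hinv n).2.2)
  have hsC : s ∈ closure C := by
    rw [mem_closure_iff_iSup]
    refine ⟨ULift.{v} ℕ, ⟨⟨0⟩⟩, fun i => a i.down, fun i => (hinv i.down).1, ?_⟩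
    apply le_antisymm
    · exact Ordinal.iSup_le fun i => Ordinal.le_iSup a i.down
    · exact Ordinal.iSup_le fun n => Ordinal.le_iSup (fun i : ULift.{v} ℕ => a i.down) ⟨n⟩
  have hsD : s ∈ closure D := by
    rw [mem_closure_iff_iSup]
    refine ⟨ULift.{v} ℕ, ⟨⟨0⟩⟩, fun i => nextIn D (a i.down), fun i => (hb i.down).1, ?_⟩
    apply le_antisymm
    · refine Ordinal.iSup_le fun i => le_trans (hba i.down) ?_
      exact Ordinal.le_iSup a (i.down + 1)
    · refine Ordinal.iSup_le fun n => le_trans (le_of_lt (hb n).2.1) ?_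
      exact Ordinal.le_iSup (fun i : ULift.{v} ℕ => nextIn D (a i.down)) ⟨n⟩
  refine ⟨s, ⟨hC3 s hslt hsC, hD3 s hslt hsD⟩, ?_⟩
  exact le_of_lt (lt_of_lt_of_le (hinv 0).2.1 (Ordinal.le_iSup a 0))

end EvConstAux

/-- Let S be a stationary subset of ω₁ with the subspace topology and Y a
regular space with Gδ points which is [ℵ₀,ℵ₁]-compact. Then every continuous f : S → Y is
eventually constant. -/
theorem eventually_constant_of_continuous_on_stationary
    (S : Set Ordinal) (hS : IsStationaryBelowOmega1 S)
    (Y : Type u) [TopologicalSpace Y] [T3Space Y]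
    (hGδ : ∀ y : Y, IsGδ ({y} : Set Y)) (hY : AlephOneCompactSpace Y)
    (f : S → Y) (hf : Continuous f) :
    ∃ (α : Ordinal) (hα : α ∈ S), ∀ (β : Ordinal) (hβ : β ∈ S),
      α ≤ β → f ⟨β, hβ⟩ = f ⟨α, hα⟩ := by
  classical
  obtain ⟨hS1, hS2⟩ := hS
  have hSunb : ∀ γ, γ < ω₁ → ∃ β, β ∈ S ∧ γ < β := by
    intro γ hγ
    obtain ⟨β, hβS, hβ⟩ := hS2 _ (EvConstAux.tail_club hγ)
    exact ⟨β, hβS, hβ.1⟩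
  obtain ⟨s0, hs0⟩ : S.Nonempty := by
    obtain ⟨β, hβ, _⟩ := hSunb 0 (omega_pos 1)
    exact ⟨β, hβ⟩
  set Tl : Ordinal → Set Y := fun γ => f '' {s : S | γ ≤ (s : Ordinal)} with hTl
  -- Step A: find a point `y` in the closure of every tail image.
  have keyA : ∃ y : Y, ∀ γ, γ < ω₁ → y ∈ closure (Tl γ) := by
    by_contra hcon
    push_neg at hcon
    set g : (Iio (ω₁ : Ordinal)) → Set Y := fun p => (closure (Tl p.1))ᶜ with hg
    have hopen : ∀ U ∈ range g, IsOpen U := by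
      rintro U ⟨p, rfl⟩
      exact isClosed_closure.isOpen_compl
    have hcard : #(range g) ≤ aleph 1 := by
      have h1 := Cardinal.mk_range_le_lift (f := g)
      rw [Cardinal.mk_Iio_ordinal, Cardinal.lift_lift, Ordinal.card_omega, Cardinal.lift_aleph,
        Ordinal.lift_one] at h1
      rw [← Cardinal.lift_le.{u_1 + 1}]
      refine h1.trans_eq ?_
      rw [Cardinal.lift_aleph, Ordinal.lift_one]
    have hcover : ⋃₀ (range g) = Set.univ := by
      ext z
      simp only [mem_sUnion, Set.mem_univ, iff_true]
      obtain ⟨γ, hγ, hz⟩ := hcon z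
      exact ⟨g ⟨γ, hγ⟩, mem_range_self _, hz⟩
    obtain ⟨𝒱, h𝒱sub, h𝒱c, h𝒱cover⟩ := hY (range g) hopen hcard hcover
    have h𝒱ne : 𝒱.Nonempty := by
      rcases Set.eq_empty_or_nonempty 𝒱 with h | h
      · rw [h, sUnion_empty] at h𝒱cover
        exact absurd (h𝒱cover.symm ▸ Set.mem_univ (f ⟨s0, hs0⟩)) (Set.notMem_empty _)
      · exact h
    obtain ⟨e, he⟩ := h𝒱c.exists_eq_range h𝒱ne
    have hpe : ∀ n, ∃ p : (Iio (ω₁ : Ordinal)), g p = e n := by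
      intro n
      exact h𝒱sub (he ▸ mem_range_self n)
    choose p hp using hpe
    have hγs : (⨆ n, ((p n : Ordinal))) < ω₁ := EvConstAux.sup_lt_omega1 (fun n => (p n).2)
    obtain ⟨β, hβS, hβ⟩ := hSunb _ hγs
    have hq : f ⟨β, hβS⟩ ∈ ⋃₀ 𝒱 := h𝒱cover.symm ▸ Set.mem_univ _
    obtain ⟨V, hV𝒱, hqV⟩ := hq
    obtain ⟨n, rfl⟩ : ∃ n, e n = V := by rw [he] at hV𝒱; exact hV𝒱
    rw [← hp n] at hqV
    apply hqV
    apply subset_closure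
    refine ⟨⟨β, hβS⟩, ?_, rfl⟩
    exact le_trans (Ordinal.le_iSup (fun n => ((p n : Ordinal))) n) (le_of_lt hβ)
  obtain ⟨y, hy⟩ := keyA
  -- Step B: preimages of open neighbourhoods of y are unbounded in ω₁.
  have unbE : ∀ W : Set Y, IsOpen W → y ∈ W → ∀ γ, γ < ω₁ →
      ∃ β, (∃ h : β ∈ S, f ⟨β, h⟩ ∈ W) ∧ γ ≤ β := by
    intro W hW hyW γ hγ
    obtain ⟨q, hqW, hqT⟩ := mem_closure_iff.mp (hy γ hγ) W hW hyW
    obtain ⟨s, hs, rfl⟩ := hqT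
    exact ⟨s.1, ⟨s.2, hqW⟩, hs⟩
  -- Step C: if `closure W ⊆ V` with `y ∈ W`, then the preimage of `V` is stationary.
  have statP : ∀ (V W : Set Y), IsOpen W → y ∈ W → closure W ⊆ V →
      ∀ D, IsClubBelowOmega1 D → ∃ α ∈ D, ∃ h : α ∈ S, f ⟨α, h⟩ ∈ V := by
    intro V W hW hyW hWV D hD
    set E : Set Ordinal := {β | ∃ h : β ∈ S, f ⟨β, h⟩ ∈ W} with hE
    have hE1 : E ⊆ Iio ω₁ := by
      rintro β ⟨h, -⟩
      exact hS1 h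
    have hE2 : ∀ γ < ω₁, ∃ β ∈ E, γ ≤ β := by
      intro γ hγ
      obtain ⟨β, hβ, hγβ⟩ := unbE W hW hyW γ hγ
      exact ⟨β, hβ, hγβ⟩
    obtain ⟨α, hαS, ⟨hαcl, -⟩, hαD⟩ :=
      hS2 _ (EvConstAux.club_inter (EvConstAux.closure_club E hE1 hE2) hD)
    refine ⟨α, hαD, hαS, ?_⟩
    by_contra hnot
    have hfα : f ⟨α, hαS⟩ ∈ (closure W)ᶜ := fun hc => hnot (hWV hc)
    have hpre : IsOpen (f ⁻¹' (closure W)ᶜ) := isClosed_closure.isOpen_compl.preimage hf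
    obtain ⟨G, hG, hGeq⟩ := isOpen_induced_iff.mp hpre
    have hαG : α ∈ G := by
      have h2 : (⟨α, hαS⟩ : S) ∈ f ⁻¹' (closure W)ᶜ := hfα
      rw [← hGeq] at h2
      exact h2
    obtain ⟨β, hβG, hβS, hβW⟩ := mem_closure_iff.mp hαcl G hG hαG
    have h3 : (⟨β, hβS⟩ : S) ∈ f ⁻¹' (closure W)ᶜ := by
      rw [← hGeq]
      exact hβG
    exact h3 (subset_closure hβW)
  -- Step D: a relatively open set whose preimage is stationary contains a tail of S.
  have tailP : ∀ V : Set Y, IsOpen V →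
      (∀ D, IsClubBelowOmega1 D → ∃ α ∈ D, ∃ h : α ∈ S, f ⟨α, h⟩ ∈ V) →
      ∃ γ, γ < ω₁ ∧ ∀ β (hβ : β ∈ S), γ ≤ β → f ⟨β, hβ⟩ ∈ V := by
    intro V hV hstat
    by_contra hcon
    push_neg at hcon
    set R : Set Ordinal := {β | ∃ h : β ∈ S, f ⟨β, h⟩ ∉ V} with hR
    have hR1 : R ⊆ Iio ω₁ := by
      rintro β ⟨h, -⟩
      exact hS1 h
    have hR2 : ∀ γ < ω₁, ∃ β ∈ R, γ ≤ β := by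
      intro γ hγ
      obtain ⟨β, hβ, hge, hnV⟩ := hcon γ hγ
      exact ⟨β, ⟨hβ, hnV⟩, hge⟩
    obtain ⟨α, ⟨hαcl, -⟩, hαS, hαV⟩ := hstat _ (EvConstAux.closure_club R hR1 hR2)
    have hpre : IsOpen (f ⁻¹' V) := hV.preimage hf
    obtain ⟨G, hG, hGeq⟩ := isOpen_induced_iff.mp hpre
    have hαG : α ∈ G := by
      have h2 : (⟨α, hαS⟩ : S) ∈ f ⁻¹' V := hαV
      rw [← hGeq] at h2
      exact h2
    obtain ⟨β, hβG, hβS, hβnV⟩ := mem_closure_iff.mp hαcl G hG hαG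
    have h3 : (⟨β, hβS⟩ : S) ∈ f ⁻¹' V := by
      rw [← hGeq]
      exact hβG
    exact hβnV h3
  -- Assemble using the Gδ property at y.
  obtain ⟨T, hTopen, hTc, hTy⟩ := hGδ y
  set T' : Set (Set Y) := insert Set.univ T with hT'
  have hT'open : ∀ t ∈ T', IsOpen t := by
    rintro t (rfl | ht)
    · exact isOpen_univ
    · exact hTopen t ht
  have hT'y : ⋂₀ T' = {y} := by
    rw [hT', sInter_insert, Set.univ_inter, ← hTy]
  obtain ⟨U, hU⟩ := (hTc.insert Set.univ).exists_eq_range ⟨Set.univ, mem_insert _ _⟩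
  have hU2 : T' = range U := hT'.trans hU
  have hUmem : ∀ n, U n ∈ T' := by
    intro n
    rw [hU2]
    exact mem_range_self n
  have hUopen : ∀ n, IsOpen (U n) := fun n => hT'open _ (hUmem n)
  have hyU : ∀ n, y ∈ U n := by
    intro n
    have h2 : y ∈ ⋂₀ T' := by rw [hT'y]; exact rfl
    exact h2 _ (hUmem n)
  have hex : ∀ n : ℕ, ∃ γ, γ < ω₁ ∧ ∀ β (hβ : β ∈ S), γ ≤ β → f ⟨β, hβ⟩ ∈ U n := by
    intro n
    obtain ⟨t, htn, htc, hts⟩ := exists_mem_nhds_isClosed_subset ((hUopen n).mem_nhds (hyU n))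
    have hyW : y ∈ interior t := mem_interior_iff_mem_nhds.mpr htn
    have hWsub : closure (interior t) ⊆ U n := by
      refine le_trans (closure_mono interior_subset) ?_
      rw [htc.closure_eq]
      exact hts
    exact tailP (U n) (hUopen n) (statP (U n) (interior t) isOpen_interior hyW hWsub)
  choose γn hγn1 hγn2 using hex
  have hγs : (⨆ n, γn n) < ω₁ := EvConstAux.sup_lt_omega1 hγn1
  obtain ⟨α₀, hα₀S, hα₀⟩ := hSunb _ hγs
  have hval : ∀ β (hβ : β ∈ S), α₀ ≤ β → f ⟨β, hβ⟩ = y := by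
    intro β hβ hle
    have h2 : f ⟨β, hβ⟩ ∈ ⋂₀ T' := by
      rw [hU2]
      rintro t ⟨n, rfl⟩
      exact hγn2 n β hβ (le_trans (Ordinal.le_iSup γn n) (le_trans (le_of_lt hα₀) hle))
    rw [hT'y] at h2
    exact h2
  exact ⟨α₀, hα₀S, fun β hβ hle => by rw [hval β hβ hle, hval α₀ hα₀S le_rfl]⟩
end

section
/- Let S be a stationary subset of ω₁ with the subspace topology, Y a regular space with Gδ points, and U ⊆ Y open with closure(U) [ℵ₀,ℵ₁]-compact. For any continuous h : S × [0,1] → Y there exists α < ω₁ such that for every t ∈ [0,1], either h(·,t)⁻¹(U) ∩ S ∩ [α,ω₁) = ∅, or h(·,t) is constant on S ∩ [α,ω₁). -/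
open Set Topology Cardinal Ordinal unitInterval

universe u

/-- A subset `A` of `Y` is [ℵ₀,ℵ₁]-compact: every cover of `A` by at most ℵ₁ many open
sets has a countable subcover. -/
def AlephOneCompactSet {Y : Type u} [TopologicalSpace Y] (A : Set Y) : Prop :=
  ∀ 𝒰 : Set (Set Y), (∀ U ∈ 𝒰, IsOpen U) → #𝒰 ≤ aleph 1 → A ⊆ ⋃₀ 𝒰 →
    ∃ 𝒱 ⊆ 𝒰, 𝒱.Countable ∧ A ⊆ ⋃₀ 𝒱

namespace Omega1Aux

lemma omega1_isLimit : Order.IsSuccLimit (ω₁ : Ordinal.{v}) := by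
  exact isSuccLimit_omega 1

lemma succ_lt_omega1 {a : Ordinal.{v}} (h : a < ω₁) : a + 1 < ω₁ := by
  rw [Ordinal.add_one_eq_succ]
  exact omega1_isLimit.succ_lt h

lemma iSup_nat_lt_omega1 (f : ℕ → Ordinal.{v}) (hf : ∀ n, f n < ω₁) : (⨆ n, f n) < ω₁ := by
  exact Ordinal.iSup_lt_omega_one hf

lemma iSup_mem_closure {s : Set Ordinal.{v}} (f : ℕ → Ordinal.{v}) (hf : ∀ n, f n ∈ s) :
    (⨆ n, f n) ∈ closure s := by
  rw [Ordinal.mem_closure_iff_iSup]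
  refine ⟨ULift ℕ, inferInstance, fun i => f i.down, fun i => hf _, ?_⟩
  exact Function.Surjective.iSup_comp (fun n => ⟨⟨n⟩, rfl⟩) f

/-- Limit points (from below) of a set of ordinals, below `ω₁`. -/
def limPts (T : Set Ordinal.{v}) : Set Ordinal.{v} := {a | a < ω₁ ∧ a ∈ closure (T ∩ Iio a)}

lemma limPts_isClub {T : Set Ordinal.{v}} (hsub : T ⊆ Iio ω₁)
    (hT : ∀ b < (ω₁ : Ordinal.{v}), ∃ x ∈ T, b < x) :
    IsClubBelowOmega1 (limPts T) := by
  refine ⟨fun a ha => ha.1, ?_, ?_⟩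
  · -- unbounded
    intro c hc
    have hch : ∀ x : Ordinal.{v}, ∃ y, x < ω₁ → (y ∈ T ∧ x < y ∧ y < ω₁) := by
      intro x
      by_cases hx : x < ω₁
      · obtain ⟨y, hyT, hy⟩ := hT x hx
        exact ⟨y, fun _ => ⟨hyT, hy, hsub hyT⟩⟩
      · exact ⟨0, fun h => absurd h hx⟩
    choose g hg using hch
    let s : ℕ → Ordinal.{v} := fun n => g^[n] c
    have hsucc : ∀ n, s (n + 1) = g (s n) := fun n => Function.iterate_succ_apply' g n c
    have hlt : ∀ n, s n < ω₁ := by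
      intro n
      induction n with
      | zero => exact hc
      | succ n ih => rw [hsucc n]; exact (hg _ ih).2.2
    have hmono : ∀ n, s n < s (n + 1) := fun n => by
      rw [hsucc n]; exact (hg _ (hlt n)).2.1
    refine ⟨⨆ n, s (n + 1), ⟨iSup_nat_lt_omega1 _ (fun n => hlt (n + 1)), ?_⟩, ?_⟩
    · apply iSup_mem_closure
      intro n
      refine ⟨by rw [hsucc n]; exact (hg _ (hlt n)).1, ?_⟩
      exact lt_of_lt_of_le (hmono (n + 1)) (Ordinal.le_iSup (fun n => s (n + 1)) (n + 1))
    · exact le_trans (hmono 0).le (Ordinal.le_iSup (fun n => s (n + 1)) 0)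
  · -- closed
    intro a ha hcl
    rcases Ordinal.mem_closure_iff_iSup.mp hcl with ⟨ι, hι, f, hf, hsup⟩
    by_cases hex : ∃ i, f i = a
    · obtain ⟨i, hi⟩ := hex; exact hi ▸ hf i
    · push_neg at hex
      refine ⟨ha, ?_⟩
      have hlt : ∀ i, f i < a := fun i =>
        lt_of_le_of_ne (hsup ▸ Ordinal.le_iSup f i) (hex i)
      have hmem : ∀ i, f i ∈ closure (T ∩ Iio a) := fun i =>
        closure_mono (inter_subset_inter_right _ (Iio_subset_Iio (hlt i).le)) (hf i).2
      have : a ∈ closure (closure (T ∩ Iio a)) := by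
        rw [Ordinal.mem_closure_iff_iSup]
        exact ⟨ι, hι, f, hmem, hsup⟩
      rwa [closure_closure] at this

lemma isClub_iInter (C : ℕ → Set Ordinal.{v}) (h : ∀ n, IsClubBelowOmega1 (C n)) :
    IsClubBelowOmega1 (⋂ n, C n) := by
  refine ⟨fun a ha => (h 0).1 (mem_iInter.mp ha 0), ?_, ?_⟩
  · intro c hc
    have hch : ∀ (n : ℕ) (x : Ordinal.{v}), ∃ y, x < ω₁ → (y ∈ C n ∧ x < y ∧ y < ω₁) := by
      intro n x
      by_cases hx : x < ω₁
      · obtain ⟨y, hyC, hy⟩ := (h n).2.1 (x + 1) (succ_lt_omega1 hx)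
        exact ⟨y, fun _ => ⟨hyC, lt_of_lt_of_le (by rw [Ordinal.add_one_eq_succ]; exact Order.lt_succ x) hy, (h n).1 hyC⟩⟩
      · exact ⟨0, fun hx' => absurd hx' hx⟩
    choose g hg using hch
    let s : ℕ → Ordinal.{v} := fun k => Nat.rec c (fun k ih => g (Nat.unpair k).1 ih) k
    have hsucc : ∀ k, s (k + 1) = g (Nat.unpair k).1 (s k) := fun k => rfl
    have hlt : ∀ k, s k < ω₁ := by
      intro k
      induction k with
      | zero => exact hc
      | succ k ih => rw [hsucc k]; exact (hg _ _ ih).2.2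
    have hstep : ∀ k, s k < s (k + 1) := fun k => by
      rw [hsucc k]; exact (hg _ _ (hlt k)).2.1
    have hmono : Monotone s := monotone_nat_of_le_succ (fun k => (hstep k).le)
    set lam := ⨆ k, s (k + 1) with hlam
    have hlamlt : lam < ω₁ := iSup_nat_lt_omega1 _ (fun k => hlt (k + 1))
    have hle : ∀ k, s k ≤ lam := fun k =>
      le_trans (hmono (Nat.le_succ k)) (Ordinal.le_iSup (fun k => s (k + 1)) k)
    have hsub : ∀ n, (⨆ j, s (Nat.pair n j + 1)) = lam := by
      intro n
      apply le_antisymm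
      · exact Ordinal.iSup_le fun j => Ordinal.le_iSup (fun k => s (k + 1)) (Nat.pair n j)
      · refine Ordinal.iSup_le fun k => ?_
        exact le_trans (hmono (Nat.succ_le_succ (Nat.right_le_pair n k)))
          (Ordinal.le_iSup (fun j => s (Nat.pair n j + 1)) k)
    refine ⟨lam, mem_iInter.mpr fun n => ?_, le_trans (hstep 0).le (Ordinal.le_iSup (fun k => s (k + 1)) 0)⟩
    refine (h n).2.2 lam hlamlt ?_
    rw [← hsub n]
    apply iSup_mem_closure
    intro j
    have := hsucc (Nat.pair n j)
    rw [Nat.unpair_pair] at this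
    rw [this]
    exact (hg n _ (hlt (Nat.pair n j))).1
  · intro a ha hcl
    rw [mem_iInter]
    intro n
    exact (h n).2.2 a ha (closure_mono (iInter_subset C n) hcl)


variable {Y : Type u} [TopologicalSpace Y]

lemma tail_dichotomy (S : Set Ordinal.{v}) (hS : IsStationaryBelowOmega1 S)
    [T3Space Y] (hGδ : ∀ y : Y, IsGδ ({y} : Set Y))
    (U : Set Y) (hU : IsOpen U) (hUc : AlephOneCompactSet (closure U))
    (f : S → Y) (hf : Continuous f) :
    ∃ α < (ω₁ : Ordinal.{v}),
      (∀ (β : Ordinal) (hβ : β ∈ S), α ≤ β → f ⟨β, hβ⟩ ∉ U) ∨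
      (∀ (β γ : Ordinal) (hβ : β ∈ S) (hγ : γ ∈ S),
        α ≤ β → α ≤ γ → f ⟨β, hβ⟩ = f ⟨γ, hγ⟩) := by
  by_cases hA : ∀ b < (ω₁ : Ordinal.{v}), ∃ sg : S, f sg ∈ U ∧ b < sg.1
  swap
  · push_neg at hA
    obtain ⟨b, hb, hbd⟩ := hA
    refine ⟨b + 1, succ_lt_omega1 hb, Or.inl ?_⟩
    intro β hβ hle hmem
    have hlt : b < β := lt_of_lt_of_le
      (by rw [Ordinal.add_one_eq_succ]; exact Order.lt_succ b) hle
    exact absurd (hbd ⟨β, hβ⟩ hmem) (not_le.mpr hlt)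
  -- main case : the preimage of U is unbounded
  have step1 : ∃ y ∈ closure U, ∀ W : Set Y, IsOpen W → y ∈ W →
      ∀ b < (ω₁ : Ordinal.{v}), ∃ sg : S, (f sg ∈ U ∧ f sg ∈ W) ∧ b < sg.1 := by
    by_contra hcon
    push_neg at hcon
    choose W hWo hWy b hbω hbd using hcon
    set G : Ordinal.{v} → Set Y :=
      fun a => ⋃ (y : Y) (hy : y ∈ closure U) (_ : b y hy < a), W y hy with hG
    have hGopen : ∀ a, IsOpen (G a) := fun a =>
      isOpen_iUnion fun y => isOpen_iUnion fun hy => isOpen_iUnion fun _ => hWo y hy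
    have hGmem : ∀ (y : Y) (hy : y ∈ closure U) (a : Ordinal.{v}),
        b y hy < a → y ∈ G a := by
      intro y hy a ha
      exact mem_iUnion.mpr ⟨y, mem_iUnion.mpr ⟨hy, mem_iUnion.mpr ⟨ha, hWy y hy⟩⟩⟩
    have hcard : #(G '' Iio (ω₁ : Ordinal.{v})) ≤ aleph 1 := by
      have h1 : Cardinal.lift.{v+1} #(G '' Iio (ω₁ : Ordinal.{v})) ≤
          Cardinal.lift.{u} #(Iio (ω₁ : Ordinal.{v})) := Cardinal.mk_image_le_lift
      rw [Cardinal.mk_Iio_ordinal, Ordinal.card_omega] at h1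
      rw [← Cardinal.lift_le.{v+1}]
      refine le_trans h1 (le_of_eq ?_)
      rw [Cardinal.lift_lift, Cardinal.lift_aleph, Cardinal.lift_aleph,
        Ordinal.lift_one, Ordinal.lift_one]
    obtain ⟨𝒱, h𝒱sub, h𝒱cnt, h𝒱cov⟩ := hUc (G '' Iio ω₁)
      (by rintro V ⟨a, _, rfl⟩; exact hGopen a) hcard
      (by intro y hy
          exact mem_sUnion.mpr ⟨G (b y hy + 1),
            mem_image_of_mem G (succ_lt_omega1 (hbω y hy)),
            hGmem y hy _ (by rw [Ordinal.add_one_eq_succ]; exact Order.lt_succ _)⟩)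
    obtain ⟨sg0, hsg0U, _⟩ := hA 0 (omega_pos 1)
    rcases 𝒱.eq_empty_or_nonempty with rfl | hne
    · simpa using h𝒱cov (subset_closure hsg0U)
    obtain ⟨e, he⟩ := h𝒱cnt.exists_eq_range hne
    have hsel : ∀ k : ℕ, ∃ x, x < (ω₁ : Ordinal.{v}) ∧ e k = G x := by
      intro k
      obtain ⟨x, hx, hGx⟩ := h𝒱sub (he ▸ mem_range_self k)
      exact ⟨x, hx, hGx.symm⟩
    choose a ha hae using hsel
    have hsup : (⨆ k, a k) < ω₁ := iSup_nat_lt_omega1 a ha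
    obtain ⟨sg, hsgU, hsggt⟩ := hA _ hsup
    obtain ⟨V, hV𝒱, hsgV⟩ := mem_sUnion.mp (h𝒱cov (subset_closure hsgU))
    obtain ⟨k, rfl⟩ := he ▸ hV𝒱
    rw [hae k] at hsgV
    obtain ⟨y, hy⟩ := mem_iUnion.mp hsgV
    obtain ⟨hyc, hy⟩ := mem_iUnion.mp hy
    obtain ⟨hylt, hyW⟩ := mem_iUnion.mp hy
    have h1 : sg.1 ≤ b y hyc := hbd y hyc sg ⟨hsgU, hyW⟩
    have h2 : b y hyc < sg.1 :=
      hylt.trans ((Ordinal.le_iSup a k).trans_lt hsggt)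
    exact absurd h1 (not_le.mpr h2)
  obtain ⟨y, hyU, hy⟩ := step1
  -- Gδ regular structure around y
  obtain ⟨V, hVopen, hVeq⟩ := (hGδ y).eq_iInter_nat
  have hyV : ∀ n, y ∈ V n := fun n => by
    have : y ∈ ⋂ n, V n := hVeq ▸ rfl
    exact mem_iInter.mp this n
  have hreg : ∀ n : ℕ, ∃ Wn : Set Y, IsOpen Wn ∧ y ∈ Wn ∧ closure Wn ⊆ V n := by
    intro n
    obtain ⟨t, htn, htc, hts⟩ :=
      exists_mem_nhds_isClosed_subset ((hVopen n).mem_nhds (hyV n))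
    exact ⟨interior t, isOpen_interior, mem_interior_iff_mem_nhds.mpr htn,
      le_trans (closure_mono interior_subset) (by rw [htc.closure_eq]; exact hts)⟩
  choose W hWo hWy hWV using hreg
  have hWcap : (⋂ n, closure (W n)) = {y} := by
    apply subset_antisymm
    · intro z hz
      rw [hVeq]
      exact mem_iInter.mpr fun n => hWV n (mem_iInter.mp hz n)
    · intro z hz
      rw [mem_singleton_iff] at hz
      subst hz
      exact mem_iInter.mpr fun n => subset_closure (hWy n)
  -- each D_n is bounded
  have hDbd : ∀ n : ℕ, ∃ b < (ω₁ : Ordinal.{v}),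
      ∀ sg : S, f sg ∉ closure (W n) → sg.1 ≤ b := by
    intro n
    by_contra hcon
    push_neg at hcon
    -- the club
    set Tv : ℕ → Set Ordinal.{v} :=
      fun m => Subtype.val '' {sg : S | f sg ∈ U ∧ f sg ∈ W m} with hTv
    set Dv : Set Ordinal.{v} :=
      Subtype.val '' {sg : S | f sg ∉ closure (W n)} with hDv
    have hTclub : ∀ m, IsClubBelowOmega1 (limPts (Tv m)) := by
      intro m
      refine limPts_isClub (by rintro x ⟨sg, -, rfl⟩; exact hS.1 sg.2) ?_
      intro c hc
      obtain ⟨sg, hsg, hcsg⟩ := hy (W m) (hWo m) (hWy m) c hc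
      exact ⟨sg.1, ⟨sg, hsg, rfl⟩, hcsg⟩
    have hDclub : IsClubBelowOmega1 (limPts Dv) := by
      refine limPts_isClub (by rintro x ⟨sg, -, rfl⟩; exact hS.1 sg.2) ?_
      intro c hc
      obtain ⟨sg, hsg1, hsg2⟩ := hcon c hc
      exact ⟨sg.1, ⟨sg, hsg1, rfl⟩, hsg2⟩
    set CC : ℕ → Set Ordinal.{v} :=
      fun k => Nat.rec (limPts Dv) (fun m _ => limPts (Tv m)) k with hCC
    have hCCclub : ∀ k, IsClubBelowOmega1 (CC k) := by
      intro k
      cases k with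
      | zero => exact hDclub
      | succ m => exact hTclub m
    obtain ⟨β, hβS, hβC⟩ := hS.2 _ (isClub_iInter CC hCCclub)
    have hβCC : ∀ k, β ∈ CC k := mem_iInter.mp hβC
    -- f ⟨β⟩ = y
    have hfy : f ⟨β, hβS⟩ = y := by
      have hmem : ∀ m, f ⟨β, hβS⟩ ∈ closure (W m) := by
        intro m
        have h1 : β ∈ closure (Tv m) :=
          closure_mono inter_subset_left (hβCC (m + 1)).2
        have h2 : (⟨β, hβS⟩ : S) ∈ closure {sg : S | f sg ∈ U ∧ f sg ∈ W m} := by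
          rw [closure_subtype]
          exact h1
        exact map_mem_closure hf h2 (fun sg hsg => hsg.2)
      have := mem_iInter.mpr hmem
      rwa [hWcap, mem_singleton_iff] at this
    -- but also f ⟨β⟩ in closure of complement of closure (W n)
    have hfd : f ⟨β, hβS⟩ ∈ closure ((closure (W n))ᶜ) := by
      have h1 : β ∈ closure Dv := closure_mono inter_subset_left (hβCC 0).2
      have h2 : (⟨β, hβS⟩ : S) ∈ closure {sg : S | f sg ∉ closure (W n)} := by
        rw [closure_subtype]
        exact h1
      exact map_mem_closure hf h2 (fun sg hsg => hsg)
    rw [hfy] at hfd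
    obtain ⟨z, hz1, hz2⟩ := mem_closure_iff.mp hfd (W n) (hWo n) (hWy n)
    exact hz2 (subset_closure hz1)
  choose bnd hbnd1 hbnd2 using hDbd
  refine ⟨(⨆ n, bnd n) + 1, succ_lt_omega1 (iSup_nat_lt_omega1 bnd hbnd1), Or.inr ?_⟩
  have key : ∀ (δ : Ordinal) (hδ : δ ∈ S), (⨆ n, bnd n) + 1 ≤ δ → f ⟨δ, hδ⟩ = y := by
    intro δ hδ hle
    have hmem : ∀ n, f ⟨δ, hδ⟩ ∈ closure (W n) := by
      intro n
      by_contra hc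
      have h1 : δ ≤ bnd n := hbnd2 n ⟨δ, hδ⟩ hc
      have h2 : bnd n < δ :=
        lt_of_lt_of_le (lt_of_le_of_lt (Ordinal.le_iSup bnd n)
          (by rw [Ordinal.add_one_eq_succ]; exact Order.lt_succ _)) hle
      exact absurd h1 (not_le.mpr h2)
    have := mem_iInter.mpr hmem
    rwa [hWcap, mem_singleton_iff] at this
  intro β γ hβ hγ hlβ hlγ
  rw [key β hβ hlβ, key γ hγ hlγ]

end Omega1Aux

open Omega1Aux Filter

/-- Let S be a stationary subset of ω₁ with the subspace topology, Y regular
with Gδ points, and U ⊆ Y open with [ℵ₀,ℵ₁]-compact closure. For every continuous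
h : S × [0,1] → Y there is α < ω₁ such that for each t, either h(·,t)⁻¹(U) misses
S ∩ [α,ω₁), or h(·,t) is constant on S ∩ [α,ω₁). -/
theorem eventually_dichotomy_of_homotopy_on_stationary
    (S : Set Ordinal) (hS : IsStationaryBelowOmega1 S)
    (Y : Type u) [TopologicalSpace Y] [T3Space Y]
    (hGδ : ∀ y : Y, IsGδ ({y} : Set Y))
    (U : Set Y) (hU : IsOpen U) (hUc : AlephOneCompactSet (closure U))
    (h : S × unitInterval → Y) (hh : Continuous h) :
    ∃ α < ω₁, ∀ t : unitInterval,
      (∀ (β : Ordinal) (hβ : β ∈ S), α ≤ β → h (⟨β, hβ⟩, t) ∉ U) ∨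
      (∀ (β γ : Ordinal) (hβ : β ∈ S) (hγ : γ ∈ S),
        α ≤ β → α ≤ γ → h (⟨β, hβ⟩, t) = h (⟨γ, hγ⟩, t)) := by
  classical
  -- per-slice dichotomy
  have slice : ∀ t : unitInterval, ∃ α < ω₁,
      (∀ (β : Ordinal) (hβ : β ∈ S), α ≤ β → h (⟨β, hβ⟩, t) ∉ U) ∨
      (∀ (β γ : Ordinal) (hβ : β ∈ S) (hγ : γ ∈ S),
        α ≤ β → α ≤ γ → h (⟨β, hβ⟩, t) = h (⟨γ, hγ⟩, t)) := by
    intro t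
    exact tail_dichotomy S hS hGδ U hU hUc (fun sg => h (sg, t))
      (hh.comp (continuous_id.prodMk continuous_const))
  choose Φ hΦlt hΦ using slice
  obtain ⟨D, hDcnt, hDdense⟩ := TopologicalSpace.exists_countable_dense unitInterval
  obtain ⟨e, he⟩ := hDcnt.exists_eq_range (hDdense.nonempty)
  set α : Ordinal := ⨆ n, Φ (e n) with hα
  have hαlt : α < ω₁ := iSup_nat_lt_omega1 _ (fun n => hΦlt (e n))
  -- the dichotomy at level α holds for every point of D
  have hD : ∀ s ∈ D,
      (∀ (β : Ordinal) (hβ : β ∈ S), α ≤ β → h (⟨β, hβ⟩, s) ∉ U) ∨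
      (∀ (β γ : Ordinal) (hβ : β ∈ S) (hγ : γ ∈ S),
        α ≤ β → α ≤ γ → h (⟨β, hβ⟩, s) = h (⟨γ, hγ⟩, s)) := by
    intro s hs
    obtain ⟨n, rfl⟩ := he ▸ hs
    have hle : Φ (e n) ≤ α := Ordinal.le_iSup (fun n => Φ (e n)) n
    rcases hΦ (e n) with hP | hQ
    · exact Or.inl fun β hβ hb => hP β hβ (hle.trans hb)
    · exact Or.inr fun β γ hβ hγ hb hg => hQ β γ hβ hγ (hle.trans hb) (hle.trans hg)
  refine ⟨α, hαlt, ?_⟩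
  intro t
  obtain ⟨x, hxD, hxt⟩ := mem_closure_iff_seq_limit.mp (hDdense t)
  by_cases hfreq : ∃ᶠ n in atTop,
      ∀ (β : Ordinal) (hβ : β ∈ S), α ≤ β → h (⟨β, hβ⟩, x n) ∉ U
  · refine Or.inl ?_
    intro β hβ hle
    have htd : Tendsto (fun n => h (⟨β, hβ⟩, x n)) atTop (𝓝 (h (⟨β, hβ⟩, t))) :=
      ((hh.comp (continuous_const.prodMk continuous_id)).tendsto t).comp hxt
    have hcl : h (⟨β, hβ⟩, t) ∈ closure Uᶜ :=
      mem_closure_of_frequently_of_tendsto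
        (hfreq.mono fun n hn => hn β hβ hle) htd
    rwa [hU.isClosed_compl.closure_eq] at hcl
  · refine Or.inr ?_
    have hev : ∀ᶠ n in atTop,
        ∀ (β γ : Ordinal) (hβ : β ∈ S) (hγ : γ ∈ S),
          α ≤ β → α ≤ γ → h (⟨β, hβ⟩, x n) = h (⟨γ, hγ⟩, x n) := by
      have := Filter.not_frequently.mp hfreq
      filter_upwards [this] with n hn
      rcases hD (x n) (hxD n) with hP | hQ
      · exact absurd hP hn
      · exact hQ
    intro β γ hβ hγ hlβ hlγ
    have htd1 : Tendsto (fun n => h (⟨β, hβ⟩, x n)) atTop (𝓝 (h (⟨β, hβ⟩, t))) :=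
      ((hh.comp (continuous_const.prodMk continuous_id)).tendsto t).comp hxt
    have htd2 : Tendsto (fun n => h (⟨γ, hγ⟩, x n)) atTop (𝓝 (h (⟨γ, hγ⟩, t))) :=
      ((hh.comp (continuous_const.prodMk continuous_id)).tendsto t).comp hxt
    exact tendsto_nhds_unique
      (htd2.congr' (by filter_upwards [hev] with n hn; exact (hn β γ hβ hγ hlβ hlγ).symm))
      htd1 |>.symm
end

section
/- Let X be a regular space with Gδ points such that every point has a closed [ℵ₀,ℵ₁]-compact neighborhood, and let S be a stationary subset of ω₁ with the subspace topology. Then there is no continuous h : S × [0,1] → X such that h(·,0) is constant and h(·,1) has uncountable image. -/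
open Set Topology Cardinal Ordinal unitInterval

universe u

namespace NoUnravel

/-! ### Ordinal basics below `ω₁` -/

lemma omega1_isLimit : Order.IsSuccLimit ω₁ := by
  exact Cardinal.isSuccLimit_omega 1

lemma omega1_pos : (0 : Ordinal) < ω₁ := omega_pos 1

lemma card_le_of_lt_omega1 {a : Ordinal} (h : a < ω₁) : a.card ≤ ℵ₀ := by
  rw [← Cardinal.ord_aleph, Cardinal.lt_ord, ← Cardinal.succ_aleph0, Order.lt_succ_iff] at h
  exact h

lemma countable_Iio_omega1 {a : Ordinal} (h : a < ω₁) : (Set.Iio a).Countable := by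
  rw [Cardinal.countable_iff_lt_aleph_one, Ordinal.mk_Iio_ordinal]
  refine lt_of_le_of_lt (Cardinal.lift_le.mpr (card_le_of_lt_omega1 h)) ?_
  rw [Cardinal.lift_aleph0]
  exact Cardinal.aleph0_lt_aleph_one

lemma countable_Iic_omega1 {a : Ordinal} (h : a < ω₁) : (Set.Iic a).Countable := by
  rw [← Order.Iio_succ]
  exact countable_Iio_omega1 (omega1_isLimit.succ_lt h)

lemma sup_seq_lt_omega1 (f : ℕ → Ordinal) (h : ∀ n, f n < ω₁) : (⨆ n, f n) < ω₁ := by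
  exact Ordinal.iSup_lt_omega_one h

lemma exists_omega1_bound {A : Set Ordinal} (hA : A.Countable) (h : ∀ a ∈ A, a < ω₁) :
    ∃ β, β < ω₁ ∧ ∀ a ∈ A, a ≤ β := by
  rcases A.eq_empty_or_nonempty with rfl | hne
  · exact ⟨0, omega1_pos, by simp⟩
  · have : Countable A := hA.to_subtype
    have : Nonempty A := hne.to_subtype
    obtain ⟨e, he⟩ := exists_surjective_nat A
    refine ⟨⨆ n, (e n : Ordinal), sup_seq_lt_omega1 _ (fun n => h _ (e n).2), ?_⟩
    intro a ha
    obtain ⟨n, hn⟩ := he ⟨a, ha⟩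
    have := Ordinal.le_iSup (fun n => (e n : Ordinal)) n
    rw [hn] at this
    exact this

/-! ### Clubs and stationary sets -/

lemma club_Iio : IsClubBelowOmega1 (Set.Iio ω₁) :=
  ⟨subset_rfl, fun α hα => ⟨α, hα, le_rfl⟩, fun α hα _ => hα⟩

lemma club_Ioo {β : Ordinal} (hβ : β < ω₁) : IsClubBelowOmega1 (Set.Ioo β ω₁) := by
  refine ⟨fun x hx => hx.2, fun α hα => ?_, fun α hα hcl => ?_⟩
  · refine ⟨max (Order.succ β) α, ⟨?_, ?_⟩, le_max_right _ _⟩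
    · exact (Order.lt_succ β).trans_le (le_max_left _ _)
    · exact max_lt (omega1_isLimit.succ_lt hβ) hα
  · refine ⟨?_, hα⟩
    have h1 : Set.Ioo β ω₁ ⊆ Set.Ici (Order.succ β) := fun x hx => Order.succ_le_of_lt hx.1
    have h2 : closure (Set.Ioo β ω₁) ⊆ Set.Ici (Order.succ β) := closure_minimal h1 isClosed_Ici
    exact (Order.lt_succ β).trans_le (h2 hcl)

lemma mem_closure_of_seq {C : Set Ordinal} (f : ℕ → Ordinal) (hf : ∀ n, f n ∈ C)
    {a : Ordinal} (ha : (⨆ n, f n) = a) : a ∈ closure C := by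
  rw [Ordinal.mem_closure_iff_iSup]
  refine ⟨ULift ℕ, inferInstance, fun i => f i.down, fun i => hf i.down, ?_⟩
  rw [← ha]
  apply le_antisymm
  · exact Ordinal.iSup_le fun i => Ordinal.le_iSup f i.down
  · exact Ordinal.iSup_le fun n => Ordinal.le_iSup (fun i : ULift ℕ => f i.down) ⟨n⟩

/-- The club of closure points of `g`. -/
def Cg (g : Ordinal → Ordinal) : Set Ordinal := {γ | γ < ω₁ ∧ ∀ b < γ, g b < γ}

lemma club_Cg {g : Ordinal → Ordinal} (hg : ∀ b < ω₁, g b < ω₁) : IsClubBelowOmega1 (Cg g) := by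
  refine ⟨fun γ hγ => hγ.1, ?_, ?_⟩
  · intro α hα
    have step : ∀ x : {o : Ordinal // o < ω₁},
        ∃ y : {o : Ordinal // o < ω₁}, x.1 < y.1 ∧ ∀ b < x.1, g b < y.1 := by
      intro x
      obtain ⟨β, hβ, hbd⟩ := exists_omega1_bound ((countable_Iio_omega1 x.2).image g)
        (by rintro a ⟨b, hb, rfl⟩; exact hg b (hb.trans x.2))
      refine ⟨⟨Order.succ (max x.1 β), omega1_isLimit.succ_lt (max_lt x.2 hβ)⟩, ?_, ?_⟩
      · exact (le_max_left _ _).trans_lt (Order.lt_succ _)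
      · intro b hb
        exact ((hbd _ ⟨b, hb, rfl⟩).trans (le_max_right _ _)).trans_lt (Order.lt_succ _)
    choose nxt hlt hdom using step
    let u : ℕ → {o : Ordinal // o < ω₁} := fun n => Nat.recAux ⟨α, hα⟩ (fun _ ih => nxt ih) n
    have husucc : ∀ n, u (n + 1) = nxt (u n) := fun n => rfl
    have hLlt : (⨆ n, (u n).1) < ω₁ := sup_seq_lt_omega1 _ (fun n => (u n).2)
    refine ⟨⨆ n, (u n).1, ⟨hLlt, ?_⟩, ?_⟩
    · intro b hb
      obtain ⟨n, hn⟩ := Ordinal.lt_iSup_iff.1 hb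
      have h1 : g b < (u (n + 1)).1 := by rw [husucc]; exact hdom (u n) b hn
      exact h1.trans_le (Ordinal.le_iSup (fun n => (u n).1) (n + 1))
    · exact Ordinal.le_iSup (fun n => (u n).1) 0
  · intro α hα hcl
    rw [Ordinal.mem_closure_iff_iSup] at hcl
    obtain ⟨ι, hι, f, hfC, hsup⟩ := hcl
    refine ⟨hα, fun b hb => ?_⟩
    have hb' : b < ⨆ i, f i := by rw [hsup]; exact hb
    obtain ⟨i, hi⟩ := Ordinal.lt_iSup_iff.1 hb'
    have hfle : f i ≤ α := by rw [← hsup]; exact Ordinal.le_iSup f i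
    exact ((hfC i).2 b hi).trans_le hfle

lemma club_inter {C D : Set Ordinal} (hC : IsClubBelowOmega1 C) (hD : IsClubBelowOmega1 D) :
    IsClubBelowOmega1 (C ∩ D) := by
  obtain ⟨hC1, hC2, hC3⟩ := hC
  obtain ⟨hD1, hD2, hD3⟩ := hD
  refine ⟨fun x hx => hC1 hx.1, ?_, ?_⟩
  · intro α hα
    have stepC : ∀ x : {o : Ordinal // o < ω₁},
        ∃ c : {o : Ordinal // o < ω₁}, c.1 ∈ C ∧ x.1 < c.1 := by
      intro x
      obtain ⟨c, hcC, hcge⟩ := hC2 (Order.succ x.1) (omega1_isLimit.succ_lt x.2)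
      exact ⟨⟨c, hC1 hcC⟩, hcC, (Order.lt_succ _).trans_le hcge⟩
    have stepD : ∀ x : {o : Ordinal // o < ω₁},
        ∃ d : {o : Ordinal // o < ω₁}, d.1 ∈ D ∧ x.1 < d.1 := by
      intro x
      obtain ⟨d, hdD, hdge⟩ := hD2 (Order.succ x.1) (omega1_isLimit.succ_lt x.2)
      exact ⟨⟨d, hD1 hdD⟩, hdD, (Order.lt_succ _).trans_le hdge⟩
    choose fC hfC hfCl using stepC
    choose fD hfD hfDl using stepD
    let u : ℕ → {o : Ordinal // o < ω₁} :=
      fun n => Nat.recAux ⟨α, hα⟩ (fun _ ih => fD (fC ih)) n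
    have husucc : ∀ n, u (n + 1) = fD (fC (u n)) := fun n => rfl
    have humono : ∀ n, (u n).1 < (fC (u n)).1 := fun n => hfCl (u n)
    have humono2 : ∀ n, (fC (u n)).1 < (u (n + 1)).1 := by
      intro n; rw [husucc]; exact hfDl (fC (u n))
    set L := ⨆ n, (u n).1 with hL
    have hLlt : L < ω₁ := sup_seq_lt_omega1 _ (fun n => (u n).2)
    have hCsup : (⨆ n, (fC (u n)).1) = L := by
      apply le_antisymm
      · exact Ordinal.iSup_le fun n => (humono2 n).le.trans
          (Ordinal.le_iSup (fun n => (u n).1) (n + 1))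
      · exact Ordinal.iSup_le fun n => (humono n).le.trans
          (Ordinal.le_iSup (fun n => (fC (u n)).1) n)
    have hDsup : (⨆ n, (u (n + 1)).1) = L := by
      apply le_antisymm
      · exact Ordinal.iSup_le fun n => Ordinal.le_iSup (fun n => (u n).1) (n + 1)
      · exact Ordinal.iSup_le fun n => ((humono n).trans (humono2 n)).le.trans
          (Ordinal.le_iSup (fun n => (u (n + 1)).1) n)
    have hLC : L ∈ C := hC3 L hLlt (mem_closure_of_seq _ (fun n => hfC (u n)) hCsup)
    have hLD : L ∈ D := by
      apply hD3 L hLlt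
      apply mem_closure_of_seq (fun n => (u (n + 1)).1) ?_ hDsup
      intro n
      show (u (n + 1)).1 ∈ D
      rw [husucc n]
      exact hfD (fC (u n))
    exact ⟨L, ⟨hLC, hLD⟩, Ordinal.le_iSup (fun n => (u n).1) 0⟩
  · intro α hα hcl
    exact ⟨hC3 α hα (closure_mono inter_subset_left hcl),
      hD3 α hα (closure_mono inter_subset_right hcl)⟩

lemma stat_inter {S C : Set Ordinal} (hS : IsStationaryBelowOmega1 S)
    (hC : IsClubBelowOmega1 C) : IsStationaryBelowOmega1 (S ∩ C) := by
  refine ⟨fun x hx => hS.1 hx.1, fun D hD => ?_⟩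
  obtain ⟨x, hxS, hxCD⟩ := hS.2 (C ∩ D) (club_inter hC hD)
  exact ⟨x, ⟨hxS, hxCD.1⟩, hxCD.2⟩

lemma stat_unbounded {S : Set Ordinal} (hS : IsStationaryBelowOmega1 S) :
    ∀ β < ω₁, ∃ α ∈ S, β < α := by
  intro β hβ
  obtain ⟨x, hx⟩ := hS.2 (Set.Ioo β ω₁) (club_Ioo hβ)
  exact ⟨x, hx.1, hx.2.1⟩

lemma stat_nonempty {S : Set Ordinal} (hS : IsStationaryBelowOmega1 S) : S.Nonempty := by
  obtain ⟨x, hx⟩ := hS.2 (Set.Iio ω₁) club_Iio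
  exact ⟨x, hx.1⟩

/-- Fodor-lite: a regressive function on a stationary set is constant on an unbounded set. -/
lemma fodor_lite {T : Set Ordinal} (hT : IsStationaryBelowOmega1 T)
    (r : Ordinal → Ordinal) (hr : ∀ α ∈ T, r α < α) :
    ∃ b, b < ω₁ ∧ ∀ β < ω₁, ∃ α ∈ T, β ≤ α ∧ r α = b := by
  by_contra hcon
  push_neg at hcon
  choose! g hg1 hg2 using hcon
  obtain ⟨α, hαT, hαC⟩ := hT.2 (Cg g) (club_Cg hg1)
  have hαω : α < ω₁ := hT.1 hαT
  have h1 : r α < α := hr α hαT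
  have h2 : g (r α) < α := hαC.2 _ h1
  exact hg2 (r α) (h1.trans hαω) α hαT h2.le rfl

lemma unbounded_pigeonhole {T : Set Ordinal} (hT : T ⊆ Set.Iio ω₁)
    (hub : ∀ β < ω₁, ∃ α ∈ T, β ≤ α) (m : Ordinal → ℕ) :
    ∃ k, ∀ β < ω₁, ∃ α ∈ T, β ≤ α ∧ m α = k := by
  by_contra hcon
  push_neg at hcon
  choose β hβ1 hβ2 using hcon
  obtain ⟨α, hαT, hαB⟩ := hub (⨆ k, β k) (sup_seq_lt_omega1 _ hβ1)
  exact hβ2 (m α) α hαT ((Ordinal.le_iSup β (m α)).trans hαB) rfl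

/-! ### Topological helpers -/

/-- A shrinking sequence of open neighborhoods of a Gδ point in a regular space. -/
lemma gdelta_shrink {X : Type u} [TopologicalSpace X] [RegularSpace X]
    (x : X) (hx : IsGδ ({x} : Set X)) :
    ∃ W : ℕ → Set X, (∀ n, IsOpen (W n)) ∧ (∀ n, x ∈ W n) ∧
      (∀ n, closure (W (n + 1)) ⊆ W n) ∧ (⋂ n, W n) ⊆ {x} := by
  obtain ⟨Ts, hTo, hTc, hTeq⟩ := hx
  have hxmem : ∀ t ∈ Ts, x ∈ t := by
    intro t ht
    have : x ∈ ⋂₀ Ts := by rw [← hTeq]; exact rfl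
    exact this t ht
  obtain ⟨v, hvo, hvx, hvint⟩ :
      ∃ v : ℕ → Set X, (∀ n, IsOpen (v n)) ∧ (∀ n, x ∈ v n) ∧ (⋂ n, v n) ⊆ {x} := by
    rcases Ts.eq_empty_or_nonempty with rfl | hne
    · refine ⟨fun _ => Set.univ, fun _ => isOpen_univ, fun _ => Set.mem_univ x, ?_⟩
      have huniv : ({x} : Set X) = Set.univ := by rw [hTeq, Set.sInter_empty]
      rw [huniv]
      exact Set.subset_univ _
    · have : Countable Ts := hTc.to_subtype
      have : Nonempty Ts := hne.to_subtype
      obtain ⟨e, he⟩ := exists_surjective_nat Ts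
      refine ⟨fun n => (e n).1, fun n => hTo _ (e n).2, fun n => hxmem _ (e n).2, ?_⟩
      intro z hz
      rw [hTeq]
      intro t ht
      obtain ⟨n, hn⟩ := he ⟨t, ht⟩
      have : z ∈ (e n).1 := Set.mem_iInter.1 hz n
      rw [hn] at this
      exact this
  have key : ∀ V : Set X, IsOpen V → x ∈ V →
      ∃ V' : Set X, IsOpen V' ∧ x ∈ V' ∧ closure V' ⊆ V := by
    intro V hVo hxV
    obtain ⟨t, htx, htc, hts⟩ := exists_mem_nhds_isClosed_subset (hVo.mem_nhds hxV)
    exact ⟨interior t, isOpen_interior, mem_interior_iff_mem_nhds.2 htx,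
      (closure_minimal interior_subset htc).trans hts⟩
  choose! shr h1 h2 h3 using key
  let W' : ℕ → {V : Set X // IsOpen V ∧ x ∈ V} := fun n => Nat.recAux ⟨v 0, hvo 0, hvx 0⟩
    (fun k ih => ⟨shr (ih.1 ∩ v (k + 1)),
      h1 _ (ih.2.1.inter (hvo (k + 1))) ⟨ih.2.2, hvx (k + 1)⟩,
      h2 _ (ih.2.1.inter (hvo (k + 1))) ⟨ih.2.2, hvx (k + 1)⟩⟩) n
  have hWsucc : ∀ n, (W' (n + 1)).1 = shr ((W' n).1 ∩ v (n + 1)) := fun n => rfl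
  refine ⟨fun n => (W' n).1, fun n => (W' n).2.1, fun n => (W' n).2.2, ?_, ?_⟩
  · intro n
    show closure (W' (n + 1)).1 ⊆ (W' n).1
    rw [hWsucc n]
    exact (h3 _ ((W' n).2.1.inter (hvo (n + 1))) ⟨(W' n).2.2, hvx (n + 1)⟩).trans
      inter_subset_left
  · intro z hz
    have hz' : ∀ n, z ∈ (W' n).1 := Set.mem_iInter.1 hz
    apply hvint
    rw [Set.mem_iInter]
    intro n
    cases n with
    | zero => exact hz' 0
    | succ k =>
        have hz2 := hz' (k + 1)
        rw [hWsucc k] at hz2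
        exact ((h3 _ ((W' k).2.1.inter (hvo (k + 1)))
          ⟨(W' k).2.2, hvx (k + 1)⟩) (subset_closure hz2)).2

/-- Cluster point of a decreasing `ω₁`-chain of nonempty subsets of an
[ℵ₀,ℵ₁]-compact set. -/
lemma exists_cluster {X : Type u} [TopologicalSpace X] {K : Set X}
    (hK : AlephOneCompactSet K) (F : Ordinal → Set X)
    (hmono : ∀ β β', β ≤ β' → F β' ⊆ F β)
    (hne : ∀ β < ω₁, (F β).Nonempty) (hsub : ∀ β < ω₁, F β ⊆ K) :
    ∃ z ∈ K, ∀ β < ω₁, z ∈ closure (F β) := by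
  by_contra hcon
  push_neg at hcon
  set 𝒰 : Set (Set X) := (fun β => (closure (F β))ᶜ) '' (Set.Iio ω₁) with h𝒰
  have hopen : ∀ U ∈ 𝒰, IsOpen U := by
    rintro U ⟨β, hβ, rfl⟩
    exact isClosed_closure.isOpen_compl
  have hcard : #𝒰 ≤ ℵ₁ := by
    have h2 := Cardinal.mk_image_le_lift (f := fun β : Ordinal => (closure (F β))ᶜ)
      (s := Set.Iio ω₁)
    rw [Ordinal.mk_Iio_ordinal, Ordinal.card_omega] at h2
    simp only [Cardinal.lift_lift, Cardinal.lift_aleph, Ordinal.lift_one] at h2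
    exact Cardinal.lift_le_aleph_one.1 h2
  have hcover : K ⊆ ⋃₀ 𝒰 := by
    intro z hz
    obtain ⟨β, hβ, hzc⟩ := hcon z hz
    exact ⟨_, ⟨β, hβ, rfl⟩, hzc⟩
  obtain ⟨𝒱, h𝒱sub, h𝒱c, h𝒱cov⟩ := hK 𝒰 hopen hcard hcover
  have hch : ∀ V ∈ 𝒱, ∃ β, β < ω₁ ∧ V = (closure (F β))ᶜ := by
    intro V hV
    obtain ⟨β, hβ, rfl⟩ := h𝒱sub hV
    exact ⟨β, hβ, rfl⟩
  choose! bV hbV1 hbV2 using hch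
  obtain ⟨β₀, hβ₀, hbd⟩ := exists_omega1_bound (h𝒱c.image bV)
    (by rintro a ⟨V, hV, rfl⟩; exact hbV1 V hV)
  obtain ⟨w, hw⟩ := hne β₀ hβ₀
  obtain ⟨V, hV𝒱, hwV⟩ := h𝒱cov (hsub β₀ hβ₀ hw)
  rw [hbV2 V hV𝒱] at hwV
  exact hwV (subset_closure (hmono _ _ (hbd _ ⟨V, hV𝒱, rfl⟩) hw))

/-! ### Continuity extraction on subtypes of ordinals -/

lemma cont_extract {X : Type u} [TopologicalSpace X] {S : Set Ordinal}
    (f : S → X) (hf : Continuous f) (p : S) (hp : p.1 ≠ 0)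
    {V : Set X} (hV : IsOpen V) (hfp : f p ∈ V) :
    ∃ c < p.1, ∀ q : S, c < q.1 → q.1 ≤ p.1 → f q ∈ V := by
  have h1 : f ⁻¹' V ∈ nhds p := hf.continuousAt.preimage_mem_nhds (hV.mem_nhds hfp)
  rw [nhds_subtype] at h1
  obtain ⟨A, hA, hAsub⟩ := Filter.mem_comap.1 h1
  obtain ⟨c, hc, hIoc⟩ := (SuccOrder.hasBasis_nhds_Ioc_of_exists_lt ⟨0, zero_le.lt_of_ne (Ne.symm hp)⟩).mem_iff.1 hA
  exact ⟨c, hc, fun q hq1 hq2 => hAsub (hIoc ⟨hq1, hq2⟩)⟩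

lemma cont_extract_prod {X : Type u} [TopologicalSpace X] {S : Set Ordinal}
    (h : S × unitInterval → X) (hh : Continuous h) (p : S) (hp : p.1 ≠ 0) (t : unitInterval)
    {V : Set X} (hV : IsOpen V) (hmem : h (p, t) ∈ V) :
    ∃ c < p.1, ∃ k : ℕ, ∀ q : S, c < q.1 → q.1 ≤ p.1 →
      ∀ s : unitInterval, dist s t < 1 / ((k : ℝ) + 1) → h (q, s) ∈ V := by
  have h1 : h ⁻¹' V ∈ nhds (p, t) := hh.continuousAt.preimage_mem_nhds (hV.mem_nhds hmem)
  rw [mem_nhds_prod_iff] at h1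
  obtain ⟨A, hA, B, hB, hsub⟩ := h1
  rw [nhds_subtype] at hA
  obtain ⟨A', hA', hA'sub⟩ := Filter.mem_comap.1 hA
  obtain ⟨c, hc, hIoc⟩ := (SuccOrder.hasBasis_nhds_Ioc_of_exists_lt ⟨0, zero_le.lt_of_ne (Ne.symm hp)⟩).mem_iff.1 hA'
  obtain ⟨ε, hε, hball⟩ := Metric.mem_nhds_iff.1 hB
  obtain ⟨k, hk⟩ := exists_nat_one_div_lt hε
  refine ⟨c, hc, k, fun q hq1 hq2 s hs => ?_⟩
  exact hsub ⟨hA'sub (hIoc ⟨hq1, hq2⟩), hball (Metric.mem_ball.2 (hs.trans hk))⟩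

/-! ### The key lemma: continuous maps with tail range inside an
[ℵ₀,ℵ₁]-compact closed set are eventually constant. -/

lemma tail_const {X : Type u} [TopologicalSpace X] [T3Space X]
    (hGδ : ∀ x : X, IsGδ ({x} : Set X))
    {S : Set Ordinal} (hS : IsStationaryBelowOmega1 S)
    (f : S → X) (hf : Continuous f)
    {K : Set X} (hKcpt : AlephOneCompactSet K)
    {b : Ordinal} (hb : b < ω₁) (htail : ∀ p : S, b < p.1 → f p ∈ K) :
    ∃ β < ω₁, ∃ y, ∀ p : S, β < p.1 → f p = y := by
  have hSsub := hS.1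
  have hSunb := stat_unbounded hS
  set F : Ordinal → Set X := fun β => f '' {p : S | max b β < p.1} with hF
  have hmono : ∀ β β', β ≤ β' → F β' ⊆ F β := by
    intro β β' hle
    apply Set.image_mono
    intro p hp
    exact lt_of_le_of_lt (max_le_max le_rfl hle) hp
  have hne : ∀ β < ω₁, (F β).Nonempty := by
    intro β hβ
    obtain ⟨α, hαS, hα⟩ := hSunb (max b β) (max_lt hb hβ)
    exact ⟨f ⟨α, hαS⟩, ⟨α, hαS⟩, hα, rfl⟩
  have hsub : ∀ β < ω₁, F β ⊆ K := by
    rintro β hβ x ⟨p, hp, rfl⟩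
    exact htail p ((le_max_left _ _).trans_lt hp)
  obtain ⟨z, hzK, hzcl⟩ := exists_cluster hKcpt F hmono hne hsub
  obtain ⟨W, hWo, hWx, hWcl, hWint⟩ := gdelta_shrink z (hGδ z)
  have hC3 : ∀ n : ℕ, ∃ β < ω₁, ∀ p : S, β < p.1 → f p ∈ W n := by
    intro n
    by_contra hcon
    push_neg at hcon
    have hstep : ∀ x < ω₁, ∃ α, (∃ hα : α ∈ S, f ⟨α, hα⟩ ∉ W n) ∧ x < α ∧ α < ω₁ := by
      intro x hx
      obtain ⟨p, hp1, hp2⟩ := hcon x hx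
      exact ⟨p.1, ⟨p.2, hp2⟩, hp1, hSsub p.2⟩
    choose! gB hgB1 hgB2 hgB3 using hstep
    set T' := S ∩ (Cg gB ∩ Set.Ioo 0 ω₁) with hT'
    have hT'stat : IsStationaryBelowOmega1 T' :=
      stat_inter hS (club_inter (club_Cg hgB3) (club_Ioo omega1_pos))
    have hout : ∀ α, ∀ hα : α ∈ T', f ⟨α, hα.1⟩ ∉ W n := by
      intro α hα hmem
      obtain ⟨c, hc, hIoc⟩ := cont_extract f hf ⟨α, hα.1⟩ (ne_of_gt hα.2.2.1) (hWo n) hmem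
      have hcω : c < ω₁ := hc.trans (hSsub hα.1)
      have h1 : gB c < α := hα.2.1.2 c hc
      have h2 : c < gB c := hgB2 c hcω
      obtain ⟨hmemS, hfnot⟩ := hgB1 c hcω
      exact hfnot (hIoc ⟨gB c, hmemS⟩ h2 h1.le)
    have hkey : ∀ α, α ∈ T' →
        ∃ c, c < α ∧ ∀ q : S, c < q.1 → q.1 ≤ α → f q ∉ closure (W (n + 1)) := by
      intro α hα
      have hVo : IsOpen (closure (W (n + 1)))ᶜ := isClosed_closure.isOpen_compl
      have hfα : f ⟨α, hα.1⟩ ∈ (closure (W (n + 1)))ᶜ := fun hmem => hout α hα (hWcl n hmem)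
      obtain ⟨c, hc, hIoc⟩ := cont_extract f hf ⟨α, hα.1⟩ (ne_of_gt hα.2.2.1) hVo hfα
      exact ⟨c, hc, fun q hq1 hq2 => hIoc q hq1 hq2⟩
    choose! cc hcc1 hcc2 using hkey
    obtain ⟨c₀, hc₀ω, hc₀⟩ := fodor_lite hT'stat cc (fun α hα => hcc1 α hα)
    have havoid : ∀ p : S, c₀ < p.1 → f p ∉ closure (W (n + 1)) := by
      intro p hp
      obtain ⟨α, hαT', hα1, hα2⟩ := hc₀ p.1 (hSsub p.2)
      have := hcc2 α hαT' p (by rw [hα2]; exact hp) hα1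
      exact this
    have hz2 := hzcl c₀ hc₀ω
    rw [mem_closure_iff] at hz2
    obtain ⟨x, hx1, hx2⟩ := hz2 (W (n + 1)) (hWo (n + 1)) (hWx (n + 1))
    obtain ⟨p, hp, rfl⟩ := hx2
    exact havoid p ((le_max_right b c₀).trans_lt hp) (subset_closure hx1)
  choose βn hβn1 hβn2 using hC3
  refine ⟨⨆ n, βn n, sup_seq_lt_omega1 _ hβn1, z, fun p hp => ?_⟩
  have hmemall : ∀ n, f p ∈ W n := fun n =>
    hβn2 n p ((Ordinal.le_iSup βn n).trans_lt hp)
  exact hWint (Set.mem_iInter.2 hmemall)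

end NoUnravel

open NoUnravel in
/-- Let X be a regular space with Gδ points in which every point has a closed
[ℵ₀,ℵ₁]-compact neighborhood, and S a stationary subset of ω₁ with the subspace topology.
There is no continuous h : S × [0,1] → X with h(·,0) constant and h(·,1) of uncountable
image. -/
theorem no_unraveling_homotopy_of_stationary
    (X : Type u) [TopologicalSpace X] [T3Space X]
    (hGδ : ∀ x : X, IsGδ ({x} : Set X))
    (hnbhd : ∀ x : X, ∃ K ∈ nhds x, IsClosed K ∧ AlephOneCompactSet K)
    (S : Set Ordinal) (hS : IsStationaryBelowOmega1 S) :
    ¬∃ h : S × unitInterval → X, Continuous h ∧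
      (∀ p q : S, h (p, 0) = h (q, 0)) ∧
      ¬(Set.range fun p : S => h (p, 1)).Countable := by
  rintro ⟨h, hcont, h0, h1unc⟩
  have hSsub := hS.1
  have hSunb := stat_unbounded hS
  have hSne : Nonempty S := (stat_nonempty hS).to_subtype
  obtain ⟨p₀⟩ := hSne
  set T : Set unitInterval :=
    {t | ∃ β < ω₁, ∃ y, ∀ p : S, β < p.1 → h (p, t) = y} with hTdef
  have h0T : (0 : unitInterval) ∈ T := ⟨0, omega1_pos, h (p₀, 0), fun p _ => h0 p p₀⟩
  have hclosed : IsClosed T := by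
    apply IsSeqClosed.isClosed
    intro x s hx hlim
    choose β hβ1 y hy using hx
    have hL : (⨆ k, β k) < ω₁ := sup_seq_lt_omega1 _ hβ1
    obtain ⟨α₀, hα₀S, hα₀⟩ := hSunb _ hL
    have tend : ∀ q : S, Filter.Tendsto (fun k => h (q, x k)) Filter.atTop (nhds (h (q, s))) :=
      fun q => ((hcont.comp (Continuous.prodMk_right q)).tendsto s).comp hlim
    refine ⟨⨆ k, β k, hL, h (⟨α₀, hα₀S⟩, s), fun p hp => ?_⟩
    have t1 : Filter.Tendsto (fun k => y k) Filter.atTop (nhds (h (p, s))) :=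
      Filter.Tendsto.congr
        (fun k => hy k p ((Ordinal.le_iSup β k).trans_lt hp)) (tend p)
    have t2 : Filter.Tendsto (fun k => y k) Filter.atTop (nhds (h (⟨α₀, hα₀S⟩, s))) :=
      Filter.Tendsto.congr
        (fun k => hy k _ ((Ordinal.le_iSup β k).trans_lt hα₀)) (tend ⟨α₀, hα₀S⟩)
    exact tendsto_nhds_unique t1 t2
  have hopen : IsOpen T := by
    rw [isOpen_iff_mem_nhds]
    intro t ht
    obtain ⟨β₀, hβ₀, y0, hy⟩ := ht
    obtain ⟨K, hKnh, hKcl, hKcpt⟩ := hnbhd y0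
    have hWo : IsOpen (interior K) := isOpen_interior
    have hWy : y0 ∈ interior K := mem_interior_iff_mem_nhds.2 hKnh
    set T₁ := S ∩ Set.Ioo β₀ ω₁ with hT₁
    have hT₁stat : IsStationaryBelowOmega1 T₁ := stat_inter hS (club_Ioo hβ₀)
    have hkey : ∀ α, α ∈ T₁ → ∃ c, c < α ∧ ∃ k : ℕ, ∀ q : S, c < q.1 → q.1 ≤ α →
        ∀ s : unitInterval, dist s t < 1 / ((k : ℝ) + 1) → h (q, s) ∈ interior K := by
      intro α hα
      have hne0 : α ≠ 0 := (lt_of_le_of_lt (show (0 : Ordinal) ≤ β₀ from zero_le) hα.2.1).ne'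
      have hmem : h (⟨α, hα.1⟩, t) ∈ interior K := by
        rw [hy ⟨α, hα.1⟩ hα.2.1]; exact hWy
      obtain ⟨c, hc, k, hall⟩ := cont_extract_prod h hcont ⟨α, hα.1⟩ hne0 t hWo hmem
      exact ⟨c, hc, k, hall⟩
    choose! cF hcF hrest using hkey
    choose! kF hkF using hrest
    obtain ⟨c₀, hc₀ω, hc₀⟩ := fodor_lite hT₁stat cF hcF
    set U := {α | α ∈ T₁ ∧ cF α = c₀} with hU
    have hUsub : U ⊆ Set.Iio ω₁ := fun α hα => hSsub hα.1.1
    have hUunb : ∀ β < ω₁, ∃ α ∈ U, β ≤ α := by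
      intro β hβ
      obtain ⟨α, h1, h2, h3⟩ := hc₀ β hβ
      exact ⟨α, ⟨h1, h3⟩, h2⟩
    obtain ⟨k₀, hk₀⟩ := unbounded_pigeonhole hUsub hUunb kF
    have hbK : max β₀ c₀ < ω₁ := max_lt hβ₀ hc₀ω
    have htails : ∀ s : unitInterval, dist s t < 1 / ((k₀ : ℝ) + 1) →
        ∀ p : S, max β₀ c₀ < p.1 → h (p, s) ∈ K := by
      intro s hs p hp
      obtain ⟨α, hαU, hα1, hα2⟩ := hk₀ p.1 (hSsub p.2)
      have happ := hkF α hαU.1 p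
        (by rw [hαU.2]; exact (le_max_right β₀ c₀).trans_lt hp) hα1 s
        (by rw [hα2]; exact hs)
      exact interior_subset happ
    have hball : Metric.ball t (1 / ((k₀ : ℝ) + 1)) ⊆ T := by
      intro s hs
      have hdist : dist s t < 1 / ((k₀ : ℝ) + 1) := Metric.mem_ball.1 hs
      have hfs : Continuous fun p : S => h (p, s) :=
        hcont.comp (continuous_id.prodMk continuous_const)
      obtain ⟨β, hβ, y, hy'⟩ := tail_const hGδ hS (fun p => h (p, s)) hfs hKcpt hbK
        (htails s hdist)
      exact ⟨β, hβ, y, hy'⟩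
    exact Filter.mem_of_superset (Metric.ball_mem_nhds t (by positivity)) hball
  have hTuniv : T = Set.univ := IsClopen.eq_univ ⟨hclosed, hopen⟩ ⟨0, h0T⟩
  have h1T : (1 : unitInterval) ∈ T := by rw [hTuniv]; exact Set.mem_univ _
  obtain ⟨β, hβ, y, hy⟩ := h1T
  apply h1unc
  have hsub : (Set.range fun p : S => h (p, 1)) ⊆
      (fun p : S => h (p, 1)) '' {p : S | p.1 ≤ β} ∪ {y} := by
    rintro x ⟨p, rfl⟩
    rcases le_or_gt p.1 β with hle | hlt
    · exact Or.inl ⟨p, hle, rfl⟩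
    · exact Or.inr (hy p hlt)
  have hcnt : ((fun p : S => h (p, 1)) '' {p : S | p.1 ≤ β} ∪ {y}).Countable := by
    apply Set.Countable.union
    · apply Set.Countable.image
      have hId : {p : S | p.1 ≤ β} = Subtype.val ⁻¹' (Set.Iic β) := rfl
      rw [hId]
      exact (countable_Iic_omega1 hβ).preimage Subtype.val_injective
    · exact Set.countable_singleton y
  exact hcnt.mono hsub
end

section
/- Any locally metrizable space X containing a topological copy of ω₁ is not contractible. -/
open Set Topology Ordinal unitInterval

universe u

open Filter

universe v

abbrev Om : Type (v + 1) := ↥(Set.Iio (ω₁ : Ordinal.{v}))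

lemma omega1_eq_ord : (ω₁ : Ordinal.{v}) = (Cardinal.aleph 1).ord := (Cardinal.ord_aleph 1).symm

lemma isLimit_omega1' : Order.IsSuccLimit (ω₁ : Ordinal.{v}) := by
  rw [omega1_eq_ord]; exact Cardinal.isSuccLimit_ord (Cardinal.aleph0_le_aleph 1)

noncomputable def osucc (a : Om.{v}) : Om.{v} :=
  ⟨a.1 + 1, by
    have := isLimit_omega1'.{v}.succ_lt (Set.mem_Iio.mp a.2)
    rw [← Ordinal.add_one_eq_succ] at this
    exact Set.mem_Iio.mpr this⟩

lemma lt_osucc (a : Om.{v}) : a < osucc a := by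
  rw [← Subtype.coe_lt_coe]
  show (a : Ordinal) < (a : Ordinal) + 1
  rw [Ordinal.add_one_eq_succ]
  exact Order.lt_succ _

noncomputable def omax (a b : Om.{v}) : Om.{v} :=
  ⟨max a.1 b.1, Set.mem_Iio.mpr (max_lt (Set.mem_Iio.mp a.2) (Set.mem_Iio.mp b.2))⟩

lemma le_omax_left (a b : Om.{v}) : a ≤ omax a b := by
  rw [← Subtype.coe_le_coe]; exact le_max_left _ _

lemma le_omax_right (a b : Om.{v}) : b ≤ omax a b := by
  rw [← Subtype.coe_le_coe]; exact le_max_right _ _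

lemma omax_eq_left {a b : Om.{v}} (h : b ≤ a) : omax a b = a :=
  Subtype.ext (max_eq_left (Subtype.coe_le_coe.mpr h))

noncomputable def osup (s : ℕ → Om.{v}) : Om.{v} :=
  ⟨⨆ n, (s n).1, Set.mem_Iio.mpr (by
    have h : ∀ n, (s n).1 < (Cardinal.aleph 1).ord := fun n => by
      rw [← omega1_eq_ord]; exact Set.mem_Iio.mp (s n).2
    have : ⨆ n, (s n).1 < (Cardinal.aleph 1).ord := by
      rw [← omega1_eq_ord]; exact Ordinal.iSup_lt_omega_one (fun n => Set.mem_Iio.mp (s n).2)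
    rwa [← omega1_eq_ord] at this)⟩

lemma le_osup (s : ℕ → Om.{v}) (n : ℕ) : s n ≤ osup s := by
  rw [← Subtype.coe_le_coe]
  exact le_ciSup (Ordinal.bddAbove_range _) n

lemma tendsto_osup (s : ℕ → Om.{v}) (hs : Monotone s) : Tendsto s atTop (𝓝 (osup s)) := by
  rw [tendsto_subtype_rng]
  exact tendsto_atTop_ciSup (fun n m h => Subtype.coe_le_coe.mpr (hs h)) (Ordinal.bddAbove_range _)

lemma tendsto_squeeze (l s : ℕ → Om.{v}) (δ : Om.{v}) (hl : Tendsto l atTop (𝓝 δ))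
    (h1 : ∀ n, l n ≤ s n) (h2 : ∀ n, s n ≤ δ) : Tendsto s atTop (𝓝 δ) := by
  rw [tendsto_subtype_rng] at *
  exact tendsto_of_tendsto_of_tendsto_of_le_of_le hl tendsto_const_nhds h1 h2



lemma eq_of_tendsto_mem {X : Type u} [TopologicalSpace X] {U : Set X} (hU : IsOpen U)
    [TopologicalSpace.MetrizableSpace U] {x : ℕ → X} {w z : X} (hw : w ∈ U) (hz : z ∈ U)
    (hxw : Tendsto x atTop (𝓝 w)) (hxz : Tendsto x atTop (𝓝 z)) : w = z := by
  letI : MetricSpace U := TopologicalSpace.metrizableSpaceMetric U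
  obtain ⟨N, hN⟩ := (hxw.eventually_mem (hU.mem_nhds hw)).exists_forall_of_atTop
  have key : ∀ (p : X) (hp : p ∈ U), Tendsto x atTop (𝓝 p) →
      Tendsto (fun k => (⟨x (k + N), hN _ (Nat.le_add_left N k)⟩ : U)) atTop (𝓝 ⟨p, hp⟩) := by
    intro p hp hxp
    rw [tendsto_subtype_rng]
    exact hxp.comp (tendsto_add_atTop_nat N)
  have := tendsto_nhds_unique (key w hw hxw) (key z hz hxz)
  exact Subtype.ext_iff.mp this

lemma eventuallyConst {X : Type u} [TopologicalSpace X] (f : Om.{v} → X) (hf : Continuous f)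
    (U : Set X) [TopologicalSpace.MetrizableSpace U] (α₀ : Om.{v})
    (htail : ∀ β, α₀ ≤ β → f β ∈ U) :
    ∃ α₁, α₀ ≤ α₁ ∧ ∀ β, α₁ ≤ β → f β = f α₁ := by
  letI : MetricSpace U := TopologicalSpace.metrizableSpaceMetric U
  set F : Om.{v} → U := fun β => ⟨f (omax β α₀), htail _ (le_omax_right _ _)⟩ with hF
  have hFval : ∀ (β : Om.{v}), α₀ ≤ β → (F β : X) = f β := by
    intro β hβ
    simp only [hF, omax_eq_left hβ]
  have hFs : ∀ (s : ℕ → Om.{v}) (δ : Om.{v}), (∀ n, α₀ ≤ s n) → α₀ ≤ δ →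
      Tendsto s atTop (𝓝 δ) → Tendsto (fun n => F (s n)) atTop (𝓝 (F δ)) := by
    intro s δ hs hδ h
    rw [tendsto_subtype_rng]
    have e1 : (fun n => ((F (s n) : X))) = fun n => f (s n) := funext fun n => hFval _ (hs n)
    rw [e1, hFval _ hδ]
    exact (hf.tendsto δ).comp h
  have step1 : ∀ ε : ℝ, 0 < ε →
      ∃ α, α₀ ≤ α ∧ ∀ β γ, α ≤ β → α ≤ γ → dist (F β) (F γ) < ε := by
    by_contra hcon
    push_neg at hcon
    obtain ⟨ε, hε, hw⟩ := hcon
    have hw' : ∀ α : Om.{v}, ∃ β γ, omax α α₀ ≤ β ∧ omax α α₀ ≤ γ ∧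
        ε ≤ dist (F β) (F γ) := by
      intro α
      obtain ⟨β, γ, h1, h2, h3⟩ := hw (omax α α₀) (le_omax_right _ _)
      exact ⟨β, γ, h1, h2, h3⟩
    choose B C hB hC hdist using hw'
    let ζ : ℕ → Om.{v} := fun n => Nat.rec α₀ (fun _ p => osucc (omax (omax (B p) (C p)) p)) n
    have hζsucc : ∀ n, ζ (n + 1) = osucc (omax (omax (B (ζ n)) (C (ζ n))) (ζ n)) := fun n => rfl
    have hζlt : ∀ n, ζ n < ζ (n + 1) := fun n => by
      rw [hζsucc]
      exact lt_of_le_of_lt (le_omax_right _ _) (lt_osucc _)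
    have hζmono : Monotone ζ := monotone_nat_of_le_succ (fun n => (hζlt n).le)
    have hζ0 : ∀ n, α₀ ≤ ζ n := fun n => hζmono (Nat.zero_le n)
    set δ := osup ζ with hδ
    have hδ0 : α₀ ≤ δ := le_trans (hζ0 0) (le_osup ζ 0)
    have hδtend : Tendsto ζ atTop (𝓝 δ) := tendsto_osup ζ hζmono
    have hBle : ∀ n, ζ n ≤ B (ζ n) := fun n => le_trans (le_omax_left _ _) (hB (ζ n))
    have hCle : ∀ n, ζ n ≤ C (ζ n) := fun n => le_trans (le_omax_left _ _) (hC (ζ n))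
    have hBδ : ∀ n, B (ζ n) ≤ δ := fun n =>
      le_trans (le_trans (le_trans (le_omax_left _ _) (le_omax_left _ _)) (lt_osucc _).le)
        ((hζsucc n ▸ le_osup ζ (n+1)))
    have hCδ : ∀ n, C (ζ n) ≤ δ := fun n =>
      le_trans (le_trans (le_trans (le_omax_right _ _) (le_omax_left _ _)) (lt_osucc _).le)
        ((hζsucc n ▸ le_osup ζ (n+1)))
    have hBtend : Tendsto (fun n => B (ζ n)) atTop (𝓝 δ) := tendsto_squeeze ζ _ δ hδtend hBle hBδ
    have hCtend : Tendsto (fun n => C (ζ n)) atTop (𝓝 δ) := tendsto_squeeze ζ _ δ hδtend hCle hCδ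
    have hFB := hFs _ δ (fun n => le_trans (hζ0 n) (hBle n)) hδ0 hBtend
    have hFC := hFs _ δ (fun n => le_trans (hζ0 n) (hCle n)) hδ0 hCtend
    have hd : Tendsto (fun n => dist (F (B (ζ n))) (F (C (ζ n)))) atTop (𝓝 0) := by
      have := hFB.dist hFC
      rwa [dist_self] at this
    obtain ⟨n, hn⟩ := (hd.eventually (gt_mem_nhds hε)).exists
    exact absurd (hdist (ζ n)) (not_le.mpr hn)
  have hpos : ∀ n : ℕ, (0:ℝ) < 1/(n+1) := fun n => by positivity
  choose A hA1 hA2 using fun n : ℕ => step1 (1/(n+1)) (hpos n)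
  set α₁ := osup A with hα₁
  have hα₀₁ : α₀ ≤ α₁ := le_trans (hA1 0) (le_osup A 0)
  refine ⟨α₁, hα₀₁, fun β hβ => ?_⟩
  have hFeq : F β = F α₁ := by
    have hd0 : dist (F β) (F α₁) ≤ 0 := by
      by_contra hdd
      push_neg at hdd
      obtain ⟨n, hn⟩ := exists_nat_one_div_lt hdd
      have := hA2 n β α₁ (le_trans (le_osup A n) hβ) (le_osup A n)
      have hcast : (1:ℝ)/(n+1) < 1/(n+1) := lt_trans (by exact_mod_cast hn) this
      exact lt_irrefl _ hcast
    exact dist_le_zero.mp hd0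
  have := Subtype.ext_iff.mp hFeq
  rwa [hFval β (le_trans hα₀₁ hβ), hFval α₁ hα₀₁] at this

lemma eventuallyConst_of_limits {X : Type u} [TopologicalSpace X]
    (hloc : ∀ x : X, ∃ U : Set X, IsOpen U ∧ x ∈ U ∧ TopologicalSpace.MetrizableSpace U)
    (f : Om.{v} → X) (hf : Continuous f) (x : ℕ → X) (α₀ : Om.{v})
    (hx : ∀ β, α₀ ≤ β → Tendsto x atTop (𝓝 (f β))) :
    ∃ α₁, ∀ β, α₁ ≤ β → f β = f α₁ := by
  by_contra hcon
  push_neg at hcon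
  choose B hB1 hB2 using hcon
  let ζ : ℕ → Om.{v} := fun n => Nat.rec α₀ (fun _ p => osucc (omax (B p) p)) n
  have hζsucc : ∀ n, ζ (n + 1) = osucc (omax (B (ζ n)) (ζ n)) := fun n => rfl
  have hζlt : ∀ n, ζ n < ζ (n + 1) := fun n => by
    rw [hζsucc]
    exact lt_of_le_of_lt (le_omax_right _ _) (lt_osucc _)
  have hζmono : Monotone ζ := monotone_nat_of_le_succ (fun n => (hζlt n).le)
  have hζ0 : ∀ n, α₀ ≤ ζ n := fun n => hζmono (Nat.zero_le n)
  set δ := osup ζ with hδdef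
  have hδ0 : α₀ ≤ δ := le_trans (hζ0 0) (le_osup ζ 0)
  have hδtend : Tendsto ζ atTop (𝓝 δ) := tendsto_osup ζ hζmono
  have hBle : ∀ n, ζ n ≤ B (ζ n) := fun n => hB1 (ζ n)
  have hBδ : ∀ n, B (ζ n) ≤ δ := fun n =>
    le_trans (le_trans (le_omax_left _ _) (lt_osucc _).le) ((hζsucc n ▸ le_osup ζ (n+1)))
  have hBtend : Tendsto (fun n => B (ζ n)) atTop (𝓝 δ) := tendsto_squeeze ζ _ δ hδtend hBle hBδ
  have hfζ : Tendsto (fun n => f (ζ n)) atTop (𝓝 (f δ)) := (hf.tendsto δ).comp hδtend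
  have hfB : Tendsto (fun n => f (B (ζ n))) atTop (𝓝 (f δ)) := (hf.tendsto δ).comp hBtend
  obtain ⟨U, hUo, hUm, hMet⟩ := hloc (f δ)
  letI := hMet
  have ev1 : ∀ᶠ n in atTop, f (ζ n) ∈ U := hfζ.eventually_mem (hUo.mem_nhds hUm)
  have ev2 : ∀ᶠ n in atTop, f (B (ζ n)) ∈ U := hfB.eventually_mem (hUo.mem_nhds hUm)
  obtain ⟨n, hn1, hn2⟩ := (ev1.and ev2).exists
  have key1 : f (ζ n) = f δ :=
    eq_of_tendsto_mem hUo hn1 hUm (hx (ζ n) (hζ0 n)) (hx δ hδ0)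
  have key2 : f (B (ζ n)) = f δ :=
    eq_of_tendsto_mem hUo hn2 hUm (hx (B (ζ n)) (le_trans (hζ0 n) (hBle n))) (hx δ hδ0)
  exact hB2 (ζ n) (key2.trans key1.symm)


/-- Any locally metrizable space X containing a topological copy of ω₁
(the set of countable ordinals with the order topology) is not contractible. -/
theorem not_contractible_of_copy_of_omega1
    (X : Type u) [TopologicalSpace X]
    (hloc : ∀ x : X, ∃ U : Set X, IsOpen U ∧ x ∈ U ∧ TopologicalSpace.MetrizableSpace U)
    (e : (Set.Iio ω₁ : Set Ordinal) → X) (he : Topology.IsEmbedding e) :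
    ¬∃ h : X × unitInterval → X, Continuous h ∧
      (∀ x : X, h (x, 1) = x) ∧ ∀ x y : X, h (x, 0) = h (y, 0) := by
  rintro ⟨h, hcont, h1, h0⟩
  set H : (Set.Iio ω₁ : Set Ordinal) × unitInterval → X := fun p => h (e p.1, p.2) with hHdef
  have hH : Continuous H := hcont.comp ((he.continuous.comp continuous_fst).prodMk continuous_snd)
  have hHt : ∀ β, Continuous fun t => H (β, t) := fun β =>
    hH.comp ((continuous_const).prodMk continuous_id)
  have hHb : ∀ t, Continuous fun β => H (β, t) := fun t =>
    hH.comp ((continuous_id).prodMk continuous_const)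
  set A : Set unitInterval := {t | ∃ α, ∀ β, α ≤ β → H (β, t) = H (α, t)} with hAdef
  have h0A : (0 : unitInterval) ∈ A := by
    refine ⟨⟨0, Set.mem_Iio.mpr (Ordinal.omega0_pos.trans omega0_lt_omega_one)⟩, fun β _ => ?_⟩
    exact h0 _ _
  have h1A : (1 : unitInterval) ∉ A := by
    rintro ⟨α, hα⟩
    have e1 : e (osucc α) = e α := by
      have := hα (osucc α) (lt_osucc α).le
      simpa only [hHdef, h1] using this
    exact absurd (he.injective e1) (ne_of_gt (lt_osucc α))
  have hopen : IsOpen A := by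
    rw [Metric.isOpen_iff]
    intro t₀ ht₀
    obtain ⟨α₀, hα₀⟩ := ht₀
    obtain ⟨U, hUo, hxU, hUm⟩ := hloc (H (α₀, t₀))
    have claim : ∃ ε : ℝ, 0 < ε ∧ ∃ α₁, ∀ t : unitInterval, dist t t₀ < ε →
        ∀ β, α₁ ≤ β → H (β, t) ∈ U := by
      by_contra hc
      push_neg at hc
      have hc' : ∀ (n : ℕ) (α : _), ∃ t : unitInterval, dist t t₀ < 1/(n+1) ∧
          ∃ β, α ≤ β ∧ H (β, t) ∉ U := by
        intro n α
        obtain ⟨t, ht, β, hβ1, hβ2⟩ := hc (1/(n+1)) (by positivity) α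
        exact ⟨t, ht, β, hβ1, hβ2⟩
      choose T hT B hB1 hB2 using hc'
      let ζ : ℕ → (Set.Iio ω₁ : Set Ordinal) := fun n => Nat.rec α₀ (fun m p => osucc (omax (B m p) p)) n
      have hζsucc : ∀ n, ζ (n + 1) = osucc (omax (B n (ζ n)) (ζ n)) := fun n => rfl
      have hζlt : ∀ n, ζ n < ζ (n + 1) := fun n => by
        rw [hζsucc]
        exact lt_of_le_of_lt (le_omax_right _ _) (lt_osucc _)
      have hζmono : Monotone ζ := monotone_nat_of_le_succ (fun n => (hζlt n).le)
      have hζ0 : ∀ n, α₀ ≤ ζ n := fun n => hζmono (Nat.zero_le n)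
      set δ := osup ζ with hδdef
      have hδ0 : α₀ ≤ δ := le_trans (hζ0 0) (le_osup ζ 0)
      have hδtend : Tendsto ζ atTop (𝓝 δ) := tendsto_osup ζ hζmono
      have hBle : ∀ n, ζ n ≤ B n (ζ n) := fun n => hB1 n (ζ n)
      have hBδ : ∀ n, B n (ζ n) ≤ δ := fun n =>
        le_trans (le_trans (le_omax_left _ _) (lt_osucc _).le) ((hζsucc n ▸ le_osup ζ (n+1)))
      have hBtend : Tendsto (fun n => B n (ζ n)) atTop (𝓝 δ) :=
        tendsto_squeeze ζ _ δ hδtend hBle hBδ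
      have hTtend : Tendsto (fun n => T n (ζ n)) atTop (𝓝 t₀) := by
        rw [Metric.tendsto_atTop]
        intro ε hε
        obtain ⟨N, hN⟩ := exists_nat_one_div_lt hε
        refine ⟨N, fun n hn => ?_⟩
        refine lt_of_lt_of_le (hT n (ζ n)) (le_trans ?_ hN.le)
        apply one_div_le_one_div_of_le
        · positivity
        · exact_mod_cast Nat.succ_le_succ hn
      have hHtend : Tendsto (fun n => H (B n (ζ n), T n (ζ n))) atTop (𝓝 (H (δ, t₀))) :=
        (hH.tendsto _).comp (hBtend.prodMk_nhds hTtend)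
      have hHδ : H (δ, t₀) = H (α₀, t₀) := hα₀ δ hδ0
      have hevU : ∀ᶠ n in atTop, H (B n (ζ n), T n (ζ n)) ∈ U := by
        apply hHtend.eventually_mem
        rw [hHδ]
        exact hUo.mem_nhds hxU
      obtain ⟨n, hn⟩ := hevU.exists
      exact hB2 n (ζ n) hn
    obtain ⟨ε, hε, α₁, hcl⟩ := claim
    refine ⟨ε, hε, fun t ht => ?_⟩
    rw [Metric.mem_ball] at ht
    letI := hUm
    obtain ⟨α₂, _, hconst⟩ := eventuallyConst (fun β => H (β, t)) (hHb t) U α₁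
      (fun β hβ => hcl t ht β hβ)
    exact ⟨α₂, fun β hβ => hconst β hβ⟩
  have hclosed : IsClosed A := by
    apply IsSeqClosed.isClosed
    intro ts t₀ hts hlim
    choose α hα using hts
    set αs := osup α with hαs
    have hx : ∀ β, αs ≤ β → Tendsto (fun n => H (αs, ts n)) atTop (𝓝 (H (β, t₀))) := by
      intro β hβ
      have h1' : Tendsto (fun n => H (β, ts n)) atTop (𝓝 (H (β, t₀))) :=
        ((hHt β).tendsto t₀).comp hlim
      have h2' : (fun n => H (β, ts n)) = fun n => H (αs, ts n) := by
        funext n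
        rw [hα n β (le_trans (le_osup α n) hβ), hα n αs (le_osup α n)]
      rwa [h2'] at h1'
    obtain ⟨α₁, hα₁⟩ := eventuallyConst_of_limits hloc (fun β => H (β, t₀)) (hHb t₀)
      (fun n => H (αs, ts n)) αs hx
    exact ⟨α₁, hα₁⟩
  have hA : A = Set.univ := IsClopen.eq_univ (s := A) ⟨hclosed, hopen⟩ ⟨0, h0A⟩
  exact h1A (hA ▸ Set.mem_univ (1 : unitInterval))
end

section
/- The long ray L = ω₁ × [0,1) with the lexicographic order topology is not contractible. -/
open Set Topology Ordinal unitInterval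
open Filter

/-- The long ray: ω₁ × [0,1) with the lexicographic order. -/
def LongRay : Type 1 := ↥(Set.Iio (ω₁ : Ordinal.{0})) ×ₗ ↥(Set.Ico (0 : ℝ) 1)

noncomputable instance : LinearOrder LongRay :=
  inferInstanceAs (LinearOrder (↥(Set.Iio (ω₁ : Ordinal.{0})) ×ₗ ↥(Set.Ico (0 : ℝ) 1)))

/-- The long ray carries the order topology. -/
noncomputable instance : TopologicalSpace LongRay := Preorder.topology LongRay

instance : OrderTopology LongRay := ⟨rfl⟩

namespace LongRayAux

/-- The ordinal part of a point of the long ray. -/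
def fst (x : LongRay) : Ordinal.{0} :=
  ((ofLex (show ↥(Set.Iio (ω₁ : Ordinal.{0})) ×ₗ ↥(Set.Ico (0 : ℝ) 1) from x)).1 : Ordinal)

/-- The real part of a point of the long ray. -/
def snd (x : LongRay) : ℝ :=
  ((ofLex (show ↥(Set.Iio (ω₁ : Ordinal.{0})) ×ₗ ↥(Set.Ico (0 : ℝ) 1) from x)).2 : ℝ)

lemma fst_lt (x : LongRay) : fst x < ω₁ :=
  (ofLex (show ↥(Set.Iio (ω₁ : Ordinal.{0})) ×ₗ ↥(Set.Ico (0 : ℝ) 1) from x)).1.2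

lemma snd_mem (x : LongRay) : snd x ∈ Set.Ico (0 : ℝ) 1 :=
  (ofLex (show ↥(Set.Iio (ω₁ : Ordinal.{0})) ×ₗ ↥(Set.Ico (0 : ℝ) 1) from x)).2.2

/-- Constructor for points of the long ray. -/
noncomputable def mk (α : Ordinal.{0}) (hα : α < ω₁) (s : ℝ) (hs : s ∈ Set.Ico (0 : ℝ) 1) :
    LongRay :=
  show ↥(Set.Iio (ω₁ : Ordinal.{0})) ×ₗ ↥(Set.Ico (0 : ℝ) 1) from toLex (⟨α, hα⟩, ⟨s, hs⟩)

@[simp] lemma fst_mk (α hα s hs) : fst (mk α hα s hs) = α := rfl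
@[simp] lemma snd_mk (α hα s hs) : snd (mk α hα s hs) = s := rfl

lemma lt_iff' {x y : LongRay} :
    x < y ↔ fst x < fst y ∨ (fst x = fst y ∧ snd x < snd y) := by
  refine Prod.Lex.lt_iff.trans ?_
  simp only [fst, snd, Subtype.ext_iff, ← Subtype.coe_lt_coe]

lemma le_iff' {x y : LongRay} :
    x ≤ y ↔ fst x < fst y ∨ (fst x = fst y ∧ snd x ≤ snd y) := by
  refine Prod.Lex.le_iff.trans ?_
  simp only [fst, snd, Subtype.ext_iff, ← Subtype.coe_lt_coe, ← Subtype.coe_le_coe]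

lemma omega1_isLimit : Order.IsSuccLimit (ω₁ : Ordinal.{0}) := by
  exact Cardinal.isSuccLimit_omega 1

lemma succ_lt_omega1 {a : Ordinal.{0}} (h : a < ω₁) : Order.succ a < ω₁ :=
  omega1_isLimit.succ_lt h

lemma sup_lt_omega1 (f : ℕ → Ordinal.{0}) (hf : ∀ n, f n < ω₁) : (⨆ n, f n) < ω₁ := by
  have := Ordinal.iSup_lt_omega_one (f := f) (by simpa [Cardinal.ord_aleph] using hf)
  simpa [Cardinal.ord_aleph] using this

lemma zero_mem : (0 : ℝ) ∈ Set.Ico (0 : ℝ) 1 := ⟨le_refl 0, one_pos⟩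

/-- Every point of the long ray has a strict upper bound. -/
lemma exists_gt (b : LongRay) : ∃ z : LongRay, b < z := by
  refine ⟨mk (Order.succ (fst b)) (succ_lt_omega1 (fst_lt b)) 0 zero_mem, ?_⟩
  rw [lt_iff']
  exact Or.inl (by simp only [fst_mk]; exact Order.lt_succ (fst b))

/-- Every sequence in the long ray is bounded above. -/
lemma exists_ub (u : ℕ → LongRay) : ∃ b : LongRay, ∀ n, u n ≤ b := by
  have hσ : (⨆ n, fst (u n)) < ω₁ := sup_lt_omega1 _ fun n => fst_lt _
  refine ⟨mk (Order.succ (⨆ n, fst (u n))) (succ_lt_omega1 hσ) 0 zero_mem, fun n => ?_⟩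
  rw [le_iff']
  exact Or.inl (by simpa using (Order.lt_succ_iff).2 (Ordinal.le_iSup _ n))

/-- Every sequence in the long ray has a convergent subsequence. -/
lemma exists_tendsto_subseq (u : ℕ → LongRay) :
    ∃ (φ : ℕ → ℕ) (x : LongRay), StrictMono φ ∧ Tendsto (fun n => u (φ n)) atTop (𝓝 x) := by
  have hPWO : (Set.univ : Set Ordinal.{0}).IsPWO :=
    (Set.isWF_univ_iff.2 inferInstance).isPWO
  obtain ⟨g, hg⟩ := hPWO.exists_monotone_subseq (f := fun n => fst (u n)) fun _ => Set.mem_univ _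
  obtain ⟨s₀, hs₀, ψ, hψ, hts⟩ :=
    (isCompact_Icc (a := (0 : ℝ)) (b := 1)).tendsto_subseq
      (x := fun n => snd (u (g n))) (fun n => Set.Ico_subset_Icc_self (snd_mem _))
  set φ : ℕ → ℕ := fun n => g (ψ n) with hφdef
  have hφ : StrictMono φ := g.strictMono.comp hψ
  have hmono : Monotone fun n => fst (u (φ n)) := fun m n hmn => hg (hψ.monotone hmn)
  have hsnd : Tendsto (fun n => snd (u (φ n))) atTop (𝓝 s₀) := hts
  by_cases hconst : ∃ N, ∀ n, N ≤ n → fst (u (φ n)) = fst (u (φ N))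
  · obtain ⟨N, hN⟩ := hconst
    by_cases hs1 : s₀ < 1
    · refine ⟨φ, mk (fst (u (φ N))) (fst_lt _) s₀ ⟨hs₀.1, hs1⟩, hφ, ?_⟩
      rw [tendsto_order]
      constructor
      · intro b hb
        replace hb := lt_iff'.1 hb
        rcases hb with hb | ⟨hb1, hb2⟩
        · filter_upwards [eventually_ge_atTop N] with n hn
          exact lt_iff'.2 <| Or.inl (by rw [hN n hn]; exact hb)
        · filter_upwards [eventually_ge_atTop N,
            hsnd.eventually_const_lt (show snd b < s₀ from hb2)] with n hn hn2
          exact lt_iff'.2 <| Or.inr ⟨by rw [hN n hn]; exact hb1, hn2⟩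
      · intro b hb
        replace hb := lt_iff'.1 hb
        rcases hb with hb | ⟨hb1, hb2⟩
        · filter_upwards [eventually_ge_atTop N] with n hn
          exact lt_iff'.2 <| Or.inl (by rw [hN n hn]; exact hb)
        · filter_upwards [eventually_ge_atTop N,
            hsnd.eventually_lt_const (show s₀ < snd b from hb2)] with n hn hn2
          exact lt_iff'.2 <| Or.inr ⟨by rw [hN n hn]; exact hb1, hn2⟩
    · -- s₀ = 1 : the limit is (α + 1, 0)
      have hs0eq : s₀ = 1 := le_antisymm hs₀.2 (not_lt.1 hs1)
      refine ⟨φ, mk (Order.succ (fst (u (φ N)))) (succ_lt_omega1 (fst_lt _)) 0 zero_mem, hφ, ?_⟩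
      rw [tendsto_order]
      constructor
      · intro b hb
        replace hb := lt_iff'.1 hb
        rcases hb with hb | ⟨hb1, hb2⟩
        · have hble : fst b ≤ fst (u (φ N)) := Order.lt_succ_iff.1 (by simpa using hb)
          rcases hble.lt_or_eq with hlt | heq
          · filter_upwards [eventually_ge_atTop N] with n hn
            exact lt_iff'.2 <| Or.inl (by rw [hN n hn]; exact hlt)
          · have hsb : snd b < 1 := (snd_mem b).2
            filter_upwards [eventually_ge_atTop N,
              hsnd.eventually_const_lt (by rw [hs0eq]; exact hsb)] with n hn hn2
            exact lt_iff'.2 <| Or.inr ⟨by rw [hN n hn]; exact heq, hn2⟩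
        · exact absurd (by simpa using hb2) (not_lt.2 (snd_mem b).1)
      · intro b hb
        replace hb := lt_iff'.1 hb
        have : Order.succ (fst (u (φ N))) ≤ fst b := by
          rcases hb with hb | ⟨hb1, _⟩
          · exact (by simpa using hb : Order.succ (fst (u (φ N))) < fst b).le
          · exact le_of_eq (by simpa using hb1)
        filter_upwards [eventually_ge_atTop N] with n hn
        exact lt_iff'.2 <| Or.inl (lt_of_lt_of_le (by rw [hN n hn]; exact Order.lt_succ _) this)
  · -- first coordinates are unbounded along the subsequence: limit is (sup, 0)
    push_neg at hconst
    have hσ : (⨆ n, fst (u (φ n))) < ω₁ := sup_lt_omega1 _ fun n => fst_lt _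
    have hstrict : ∀ n, fst (u (φ n)) < ⨆ m, fst (u (φ m)) := by
      intro n
      obtain ⟨m, hm, hne⟩ := hconst n
      have h1 : fst (u (φ n)) ≤ fst (u (φ m)) := hmono hm
      have h2 : fst (u (φ n)) < fst (u (φ m)) := h1.lt_of_ne fun e => hne (e.symm)
      exact h2.trans_le (Ordinal.le_iSup _ m)
    refine ⟨φ, mk (⨆ n, fst (u (φ n))) hσ 0 zero_mem, hφ, ?_⟩
    rw [tendsto_order]
    constructor
    · intro b hb
      replace hb := lt_iff'.1 hb
      rcases hb with hb | ⟨hb1, hb2⟩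
      · have hb' : fst b < ⨆ n, fst (u (φ n)) := by simpa using hb
        have : ∃ n, fst b < fst (u (φ n)) := by
          by_contra hcon
          push_neg at hcon
          exact absurd (Ordinal.iSup_le hcon) (not_le.2 hb')
        obtain ⟨n, hn⟩ := this
        filter_upwards [eventually_ge_atTop n] with m hm
        exact lt_iff'.2 <| Or.inl (hn.trans_le (hmono hm))
      · exact absurd (by simpa using hb2) (not_lt.2 (snd_mem b).1)
    · intro b hb
      replace hb := lt_iff'.1 hb
      have hble : (⨆ n, fst (u (φ n))) ≤ fst b := by
        rcases hb with hb | ⟨hb1, _⟩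
        · exact (by simpa using hb : (⨆ n, fst (u (φ n))) < fst b).le
        · exact le_of_eq (by simpa using hb1)
      filter_upwards [] with n
      exact lt_iff'.2 <| Or.inl (lt_of_lt_of_le (hstrict n) hble)

end LongRayAux

open LongRayAux

/-- The long ray L = ω₁ × [0,1) with the lexicographic order topology is
not contractible. -/
theorem longRay_not_contractible :
    ¬∃ h : LongRay × unitInterval → LongRay, Continuous h ∧
      (∀ x : LongRay, h (x, 1) = x) ∧ ∀ x y : LongRay, h (x, 0) = h (y, 0) := by
  rintro ⟨h, hcont, h1, h0⟩
  set B : Set unitInterval := {t | ∃ b : LongRay, ∀ x : LongRay, h (x, t) ≤ b} with hBdef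
  have hBc : IsSeqClosed B := by
    intro u t hu hut
    choose b hb using hu
    obtain ⟨c, hc⟩ := exists_ub b
    refine ⟨c, fun x => ?_⟩
    have ht : Tendsto (fun n => h (x, u n)) atTop (𝓝 (h (x, t))) :=
      (hcont.tendsto _).comp (tendsto_const_nhds.prodMk_nhds hut)
    exact le_of_tendsto ht (Eventually.of_forall fun n => (hb n x).trans (hc n))
  have hBoc : IsSeqClosed Bᶜ := by
    intro u t hu hut
    rw [Set.mem_compl_iff]
    rintro ⟨bb, hbb⟩
    obtain ⟨z, hz⟩ := exists_gt bb
    have hx : ∀ n, ∃ x : LongRay, z < h (x, u n) := by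
      intro n
      by_contra hcon
      push_neg at hcon
      exact hu n ⟨z, hcon⟩
    choose xs hxs using hx
    obtain ⟨φ, x, hφ, hxt⟩ := exists_tendsto_subseq xs
    have htt : Tendsto (fun n => h (xs (φ n), u (φ n))) atTop (𝓝 (h (x, t))) :=
      (hcont.tendsto _).comp (hxt.prodMk_nhds (hut.comp hφ.tendsto_atTop))
    have hge : z ≤ h (x, t) := ge_of_tendsto htt (Eventually.of_forall fun n => (hxs _).le)
    exact absurd ((hbb x).trans_lt hz) (not_lt.2 hge)
  have hclopen : IsClopen B := ⟨hBc.isClosed, by rw [← isClosed_compl_iff]; exact hBoc.isClosed⟩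
  have x₀ : LongRay := mk 0 (Ordinal.omega_pos 1) 0 zero_mem
  have h0B : (0 : unitInterval) ∈ B := ⟨h (x₀, 0), fun x => (h0 x x₀).le⟩
  have hBuniv : B = Set.univ := by
    rcases isClopen_iff.1 hclopen with h' | h'
    · rw [h'] at h0B; exact absurd h0B (Set.notMem_empty _)
    · exact h'
  have h1B : (1 : unitInterval) ∈ B := hBuniv ▸ Set.mem_univ _
  obtain ⟨b, hb⟩ := h1B
  obtain ⟨z, hz⟩ := exists_gt b
  have := hb z
  rw [h1 z] at this
  exact absurd this (not_le.2 hz)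
end
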